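/- arXiv:1011.5666 — 7 statements merged into one kernel-verified Lean document; each statement's English description precedes it below -/
import Mathlib

section
/- Let K and T be convex bodies in ℝ^n. Then for every c ∈ ℝ^n with vol(K ∩ (T + c)) > 0, the covering number satisfies N(K,T) ≤ 6^n · vol(K) / vol(K ∩ (T + c)). -/
open MeasureTheory Pointwise
open scoped ENNReal

noncomputable section

abbrev Euc (n : ℕ) := EuclideanSpace ℝ (Fin n)

/-- A convex body: a compact convex set with nonempty interior. -/
def IsConvexBody {n : ℕ} (K : Set (Euc n)) : Prop :=
  Convex ℝ K ∧ IsCompact K ∧ (interior K).Nonempty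

/-- The covering number `N(K,T)`: the least cardinality of a finite set `Λ`
with `K ⊆ Λ + T`.  It is `⊤` if no finite cover exists. -/
def coveringNumber {n : ℕ} (K T : Set (Euc n)) : ℕ∞ :=
  sInf {m : ℕ∞ | ∃ Λ : Finset (Euc n), (Λ.card : ℕ∞) = m ∧ K ⊆ ↑Λ + T}

theorem covering_number_le_of_intersection_volume
    {n : ℕ} (K T : Set (Euc n)) (hK : IsConvexBody K) (hT : IsConvexBody T)
    (c : Euc n) (hpos : 0 < volume (K ∩ (c +ᵥ T))) :
    (coveringNumber K T : ℝ≥0∞) ≤ 6 ^ n * volume K / volume (K ∩ (c +ᵥ T)) := by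
  classical
  obtain ⟨hKconv, hKcpt, -⟩ := hK
  obtain ⟨hTconv, hTcpt, -⟩ := hT
  set S : Set (Euc n) := K ∩ (c +ᵥ T) with hSdef
  have hcTcl : IsClosed (c +ᵥ T) := by
    have : IsCompact (c +ᵥ T) := by
      rw [← Set.image_vadd]; exact hTcpt.image (continuous_const_vadd c)
    exact this.isClosed
  have hScpt : IsCompact S := hKcpt.inter_right hcTcl
  have hScl : IsClosed S := hScpt.isClosed
  have hSmeas : MeasurableSet S := hScl.measurableSet
  have hSconv : Convex ℝ S := hKconv.inter (hTconv.vadd c)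
  have hSK : S ⊆ K := Set.inter_subset_left
  have hST : S ⊆ c +ᵥ T := Set.inter_subset_right
  have hSpos : 0 < volume S := hpos
  have hKfin : volume K ≠ ⊤ := hKcpt.measure_lt_top.ne
  have hSfin : volume S ≠ ⊤ := ((measure_mono hSK).trans_lt hKcpt.measure_lt_top).ne
  -- the averaging set
  set E : Set (Euc n × Euc n) :=
    {p : Euc n × Euc n | p.1 ∈ S ∧ p.2 ∈ S ∧ (2:ℝ) • p.1 - p.2 ∈ S} with hEdef
  have hEmeas : MeasurableSet E :=
    (measurable_fst hSmeas).inter ((measurable_snd hSmeas).inter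
      (((continuous_fst.const_smul (2:ℝ)).sub continuous_snd).measurable hSmeas))
  set J : Euc n → ℝ≥0∞ := fun x => volume (Prod.mk x ⁻¹' E) with hJdef
  have hJmeas : Measurable J := measurable_measure_prodMk_left hEmeas
  set κ : ℝ≥0∞ := ENNReal.ofReal ((2:ℝ)⁻¹ ^ n) with hκdef
  have hκ0 : κ ≠ 0 := by
    simp only [hκdef, ne_eq, ENNReal.ofReal_eq_zero, not_le]
    positivity
  have hκtop : κ ≠ ⊤ := ENNReal.ofReal_ne_top
  have hhalfvol : ∀ B : Set (Euc n), volume ((2⁻¹:ℝ) • B) = κ * volume B := by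
    intro B
    rw [Measure.addHaar_smul, finrank_euclideanSpace_fin, hκdef]
    congr 2
    rw [abs_of_nonneg (by positivity)]
  -- compute the double integral two ways
  have hprod : (volume.prod volume) E = ∫⁻ x, J x := Measure.prod_apply hEmeas
  have hprod' : (volume.prod volume) E = (κ * volume S) * volume S := by
    rw [Measure.prod_apply_symm hEmeas]
    have hfun : (fun y => volume ((fun x => (x, y)) ⁻¹' E))
        = S.indicator (fun _ => κ * volume S) := by
      funext y
      by_cases hy : y ∈ S
      · have hset : ((fun x : Euc n => (x, y)) ⁻¹' E) = (2⁻¹:ℝ) • (y +ᵥ S) := by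
          ext x
          simp only [Set.mem_preimage, hEdef, Set.mem_setOf_eq]
          rw [Set.mem_smul_set]
          constructor
          · rintro ⟨hxS, -, hx2⟩
            refine ⟨y + ((2:ℝ) • x - y), Set.vadd_mem_vadd_set hx2, ?_⟩
            module
          · rintro ⟨w, hw, hwx⟩
            rw [Set.mem_vadd_set] at hw
            obtain ⟨s, hs, hsw⟩ := hw
            rw [vadd_eq_add] at hsw
            subst hsw
            subst hwx
            have hxmem : (2⁻¹:ℝ) • (y + s) ∈ S := by
              rw [smul_add]
              exact hSconv hy hs (by norm_num) (by norm_num) (by norm_num)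
            refine ⟨hxmem, hy, ?_⟩
            have heq : (2:ℝ) • ((2⁻¹:ℝ) • (y + s)) - y = s := by module
            rw [heq]
            exact hs
        rw [hset, Set.indicator_of_mem hy, hhalfvol, measure_vadd]
      · have hset : ((fun x : Euc n => (x, y)) ⁻¹' E) = (∅ : Set (Euc n)) := by
          ext x
          simp only [Set.mem_preimage, hEdef, Set.mem_setOf_eq, Set.mem_empty_iff_false,
            iff_false]
          rintro ⟨-, h2, -⟩
          exact hy h2
        rw [hset, Set.indicator_of_notMem hy, measure_empty]
    rw [hfun, lintegral_indicator hSmeas, setLIntegral_const]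
  -- find a good center s₀
  have hkey : ∫⁻ x in S, J x = (κ * volume S) * volume S := by
    rw [← hprod', hprod]
    rw [← lintegral_indicator hSmeas]
    congr 1
    funext x
    by_cases hx : x ∈ S
    · rw [Set.indicator_of_mem hx]
    · rw [Set.indicator_of_notMem hx]
      have : (Prod.mk x ⁻¹' E) = (∅ : Set (Euc n)) := by
        ext y
        simp only [Set.mem_preimage, hEdef, Set.mem_setOf_eq, Set.mem_empty_iff_false, iff_false]
        rintro ⟨h1, -, -⟩
        exact hx h1
      rw [hJdef]
      simp [this]
  have hfin' : (κ * volume S) * volume S ≠ ⊤ :=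
    ENNReal.mul_ne_top (ENNReal.mul_ne_top hκtop hSfin) hSfin
  have hexists : ∃ s₀ ∈ S, κ * volume S ≤ J s₀ := by
    by_contra hcon
    push_neg at hcon
    have hlt := setLIntegral_strict_mono hSmeas hSpos.ne' (measurable_const)
      (by rw [hkey]; exact hfin') (ae_of_all _ (fun x hx => hcon x hx))
    rw [hkey, setLIntegral_const] at hlt
    exact lt_irrefl _ hlt
  obtain ⟨s₀, hs₀S, hJs₀⟩ := hexists
  -- the symmetrized set
  set S' : Set (Euc n) := {y | y ∈ S ∧ (2:ℝ) • s₀ - y ∈ S} with hS'def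
  have hS'vol : volume S' = J s₀ := by
    rw [hJdef]
    congr 1
    ext y
    simp only [hS'def, Set.mem_setOf_eq, Set.mem_preimage, hEdef]
    exact ⟨fun h => ⟨hs₀S, h.1, h.2⟩, fun h => ⟨h.2.1, h.2.2⟩⟩
  have hS'S : S' ⊆ S := fun y hy => hy.1
  have hs₀S' : s₀ ∈ S' := ⟨hs₀S, by rw [two_smul, add_sub_cancel_right]; exact hs₀S⟩
  have hS'conv : Convex ℝ S' := by
    rintro y₁ ⟨h₁S, h₁r⟩ y₂ ⟨h₂S, h₂r⟩ a b ha hb hab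
    refine ⟨hSconv h₁S h₂S ha hb hab, ?_⟩
    have hmem := hSconv h₁r h₂r ha hb hab
    have heq : a • ((2:ℝ) • s₀ - y₁) + b • ((2:ℝ) • s₀ - y₂)
        = (2:ℝ) • s₀ - (a • y₁ + b • y₂) := by
      have h2 : a • ((2:ℝ) • s₀) + b • ((2:ℝ) • s₀) = (2:ℝ) • s₀ := by
        rw [← add_smul, hab, one_smul]
      rw [smul_sub, smul_sub,
        show a • ((2:ℝ) • s₀) - a • y₁ + (b • ((2:ℝ) • s₀) - b • y₂)
          = (a • ((2:ℝ) • s₀) + b • ((2:ℝ) • s₀)) - (a • y₁ + b • y₂) from by abel, h2]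
    rwa [heq] at hmem
  have hS'cl : IsClosed S' := by
    have : S' = S ∩ ((fun y => (2:ℝ) • s₀ - y) ⁻¹' S) := rfl
    rw [this]
    exact hScl.inter (hScl.preimage (continuous_const.sub continuous_id))
  have hS'cpt : IsCompact S' := IsCompact.of_isClosed_subset hScpt hS'cl hS'S
  -- the symmetric packing set A
  set A : Set (Euc n) := (2⁻¹:ℝ) • ((-s₀) +ᵥ S') with hAdef
  have hAcpt : IsCompact A := by
    have h1 : IsCompact ((-s₀) +ᵥ S') := by
      rw [← Set.image_vadd]; exact hS'cpt.image (continuous_const_vadd _)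
    rw [hAdef, ← Set.image_smul]
    exact h1.image (continuous_const_smul _)
  have hAmeas : MeasurableSet A := hAcpt.isClosed.measurableSet
  have h0A : (0 : Euc n) ∈ A := by
    have := Set.smul_mem_smul_set (a := (2⁻¹:ℝ)) (Set.vadd_mem_vadd_set (a := -s₀) hs₀S')
    simpa using this
  have hAvol : volume A = κ * volume S' := by
    rw [hAdef, hhalfvol, measure_vadd]
  have hAvolpos : 0 < volume A := by
    rw [hAvol, hS'vol]
    exact (ENNReal.mul_pos hκ0 (ENNReal.mul_pos hκ0 hSpos.ne').ne').trans_le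
      (mul_le_mul_right hJs₀ κ)
  have hAvoltop : volume A ≠ ⊤ := hAcpt.measure_lt_top.ne
  -- key difference property
  have hsub : ∀ a ∈ A, ∀ b ∈ A, a - b ∈ (-s₀) +ᵥ S' := by
    rintro a ha b hb
    obtain ⟨wa, hwa, rfl⟩ := ha
    obtain ⟨za, hza, rfl⟩ := hwa
    obtain ⟨wb, hwb, rfl⟩ := hb
    obtain ⟨zb, hzb, rfl⟩ := hwb
    have hzb' : (2:ℝ) • s₀ - zb ∈ S' := by
      refine ⟨hzb.2, ?_⟩
      rw [sub_sub_cancel]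
      exact hzb.1
    have hmid : (2⁻¹:ℝ) • za + (2⁻¹:ℝ) • ((2:ℝ) • s₀ - zb) ∈ S' :=
      hS'conv hza hzb' (by norm_num) (by norm_num) (by norm_num)
    refine ⟨(2⁻¹:ℝ) • za + (2⁻¹:ℝ) • ((2:ℝ) • s₀ - zb), hmid, ?_⟩
    show -s₀ + ((2⁻¹:ℝ) • za + (2⁻¹:ℝ) • ((2:ℝ) • s₀ - zb))
      = (2⁻¹:ℝ) • (-s₀ + za) - (2⁻¹:ℝ) • (-s₀ + zb)
    module
  -- counting bound for packings
  have hcount : ∀ Λ : Finset (Euc n), ↑Λ ⊆ K →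
      (↑Λ : Set (Euc n)).PairwiseDisjoint (· +ᵥ A) →
      (Λ.card : ℝ≥0∞) * volume A ≤ ENNReal.ofReal ((3/2:ℝ) ^ n) * volume K := by
    intro Λ hΛK hΛd
    have hUsub : ∀ lam ∈ Λ, lam +ᵥ A ⊆ (-((2⁻¹:ℝ) • s₀)) +ᵥ ((1 + 2⁻¹:ℝ) • K) := by
      intro lam hlam x hx
      obtain ⟨a, ha, rfl⟩ := hx
      obtain ⟨w, hw, rfl⟩ := ha
      obtain ⟨z, hz, rfl⟩ := hw
      have hzK : z ∈ K := hSK (hS'S hz)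
      have hlamK : lam ∈ K := hΛK hlam
      refine ⟨lam + (2⁻¹:ℝ) • z, ?_, ?_⟩
      · rw [hKconv.add_smul (by norm_num) (by norm_num), one_smul]
        exact Set.add_mem_add hlamK (Set.smul_mem_smul_set hzK)
      · show -((2⁻¹:ℝ) • s₀) + (lam + (2⁻¹:ℝ) • z) = lam + (2⁻¹:ℝ) • (-s₀ + z)
        module
    have hmeas : ∀ lam ∈ Λ, MeasurableSet (lam +ᵥ A) := fun lam _ => hAmeas.const_vadd lam
    calc (Λ.card : ℝ≥0∞) * volume A
        = ∑ lam ∈ Λ, volume (lam +ᵥ A) := by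
          simp [measure_vadd, Finset.sum_const, nsmul_eq_mul]
      _ = volume (⋃ lam ∈ Λ, lam +ᵥ A) := (measure_biUnion_finset hΛd hmeas).symm
      _ ≤ volume ((-((2⁻¹:ℝ) • s₀)) +ᵥ ((1 + 2⁻¹:ℝ) • K)) :=
          measure_mono (Set.iUnion₂_subset hUsub)
      _ = ENNReal.ofReal ((3/2:ℝ) ^ n) * volume K := by
          rw [measure_vadd, Measure.addHaar_smul, finrank_euclideanSpace_fin]
          congr 2
          rw [abs_of_nonneg (by positivity)]
          norm_num
  -- the maximal packing
  set Nb : ℕ := Nat.floor ((ENNReal.ofReal ((3/2:ℝ) ^ n) * volume K / volume A).toReal)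
    with hNbdef
  have hcardle : ∀ Λ : Finset (Euc n), ↑Λ ⊆ K →
      (↑Λ : Set (Euc n)).PairwiseDisjoint (· +ᵥ A) → Λ.card ≤ Nb := by
    intro Λ h1 h2
    have h3 := hcount Λ h1 h2
    have h4 : (Λ.card : ℝ≥0∞) ≤ ENNReal.ofReal ((3/2:ℝ) ^ n) * volume K / volume A :=
      (ENNReal.le_div_iff_mul_le (Or.inl hAvolpos.ne') (Or.inl hAvoltop)).2 h3
    have h5 : ENNReal.ofReal ((3/2:ℝ) ^ n) * volume K / volume A ≠ ⊤ :=
      (ENNReal.div_lt_top (ENNReal.mul_ne_top ENNReal.ofReal_ne_top hKfin) hAvolpos.ne').ne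
    have h6 := ENNReal.toReal_mono h5 h4
    rw [ENNReal.toReal_natCast] at h6
    exact Nat.le_floor h6
  set Cset : Set ℕ := {m | ∃ Λ : Finset (Euc n), (↑Λ ⊆ K ∧
      (↑Λ : Set (Euc n)).PairwiseDisjoint (· +ᵥ A)) ∧ Λ.card = m} with hCdef
  have hCne : Cset.Nonempty := ⟨0, ∅, ⟨by simp, by simp⟩, rfl⟩
  have hCbdd : BddAbove Cset := ⟨Nb, by rintro m ⟨Λ, ⟨h1, h2⟩, rfl⟩; exact hcardle Λ h1 h2⟩
  obtain ⟨Λ, ⟨hΛK, hΛd⟩, hΛcard⟩ := Nat.sSup_mem hCne hCbdd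
  -- maximality
  have hmax : ∀ y ∈ K, ∃ lam ∈ Λ, ¬ Disjoint (y +ᵥ A) (lam +ᵥ A) := by
    intro y hy
    by_contra hcon
    push_neg at hcon
    have hyΛ : y ∉ Λ := by
      intro hyΛ
      have h := hcon y hyΛ
      rw [disjoint_self] at h
      have : y +ᵥ (0:Euc n) ∈ y +ᵥ A := Set.vadd_mem_vadd_set h0A
      rw [h] at this
      exact this
    have hgood : (↑(insert y Λ) : Set (Euc n)) ⊆ K ∧
        (↑(insert y Λ) : Set (Euc n)).PairwiseDisjoint (· +ᵥ A) := by
      constructor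
      · rw [Finset.coe_insert]
        exact Set.insert_subset hy hΛK
      · rw [Finset.coe_insert]
        exact hΛd.insert (fun lam hlam _ => hcon lam hlam)
    have hmem : (insert y Λ).card ∈ Cset := ⟨insert y Λ, hgood, rfl⟩
    have hle := le_csSup hCbdd hmem
    rw [Finset.card_insert_of_notMem hyΛ, hΛcard] at hle
    omega
  -- the covering
  set Λ' : Finset (Euc n) := Λ.image (fun x => x + (c - s₀)) with hΛ'def
  have hcov : K ⊆ ↑Λ' + T := by
    intro y hy
    obtain ⟨lam, hlam, hnd⟩ := hmax y hy
    obtain ⟨p, hp1, hp2⟩ := Set.not_disjoint_iff.1 hnd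
    obtain ⟨a₁, ha₁, hpe₁⟩ := hp1
    obtain ⟨a₂, ha₂, hpe₂⟩ := hp2
    have hdiff := hsub a₂ ha₂ a₁ ha₁
    obtain ⟨z, hz, hzeq⟩ := hdiff
    obtain ⟨t, ht, hteq⟩ := hST (hS'S hz)
    simp only [vadd_eq_add] at hpe₁ hpe₂ hzeq hteq
    have hyeq : y = (lam + (c - s₀)) + t := by
      have h1 : y = lam + a₂ - a₁ := by
        rw [hpe₂, ← hpe₁]; abel
      rw [h1, add_sub_assoc, ← hzeq, ← hteq]
      abel
    rw [hyeq]
    refine Set.add_mem_add ?_ ht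
    exact Finset.mem_coe.2 (Finset.mem_image_of_mem _ hlam)
  -- putting it together
  have hN : (coveringNumber K T : ℝ≥0∞) ≤ (Λ.card : ℝ≥0∞) := by
    have h1 : coveringNumber K T ≤ (Λ'.card : ℕ∞) := sInf_le ⟨Λ', rfl, hcov⟩
    have h2 : (Λ'.card : ℕ∞) ≤ (Λ.card : ℕ∞) := by
      exact_mod_cast Finset.card_image_le
    have h3 := h1.trans h2
    have := ENat.toENNReal_le.2 h3
    simpa using this
  have hvolSA : volume S ≤ (4:ℝ≥0∞) ^ n * volume A := by
    have h1 : κ * (κ * volume S) ≤ volume A := by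
      rw [hAvol, hS'vol]
      exact mul_le_mul_right hJs₀ κ
    have h2 : (4:ℝ≥0∞) ^ n * (κ * κ) = 1 := by
      have h4 : (4:ℝ≥0∞) ^ n = ENNReal.ofReal ((4:ℝ) ^ n) := by
        rw [ENNReal.ofReal_pow (by norm_num)]
        norm_num
      rw [h4, hκdef, ← ENNReal.ofReal_mul (by positivity), ← ENNReal.ofReal_mul (by positivity)]
      rw [← mul_pow, ← mul_pow]
      norm_num
    calc volume S = ((4:ℝ≥0∞) ^ n * (κ * κ)) * volume S := by rw [h2, one_mul]
      _ = (4:ℝ≥0∞) ^ n * (κ * (κ * volume S)) := by ring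
      _ ≤ (4:ℝ≥0∞) ^ n * volume A := mul_le_mul_right h1 _
  rw [ENNReal.le_div_iff_mul_le (Or.inl hSpos.ne') (Or.inl hSfin)]
  calc (coveringNumber K T : ℝ≥0∞) * volume S
      ≤ (Λ.card : ℝ≥0∞) * volume S := mul_le_mul_left hN _
    _ ≤ (Λ.card : ℝ≥0∞) * ((4:ℝ≥0∞) ^ n * volume A) := mul_le_mul_right hvolSA _
    _ = (4:ℝ≥0∞) ^ n * ((Λ.card : ℝ≥0∞) * volume A) := by ring
    _ ≤ (4:ℝ≥0∞) ^ n * (ENNReal.ofReal ((3/2:ℝ) ^ n) * volume K) :=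
        mul_le_mul_right (hcount Λ hΛK hΛd) _
    _ = 6 ^ n * volume K := by
        rw [← mul_assoc]
        congr 1
        have h4 : (4:ℝ≥0∞) ^ n = ENNReal.ofReal ((4:ℝ) ^ n) := by
          rw [ENNReal.ofReal_pow (by norm_num)]
          norm_num
        rw [h4, ← ENNReal.ofReal_mul (by positivity), ← mul_pow]
        norm_num

end
end

section
/- Let K and T be convex bodies in ℝ^n with T centrally symmetric. Then N(K,T) ≤ vol(K + (1/2)T) / vol((1/2)T). -/
open MeasureTheory Pointwise
open scoped ENNReal

noncomputable section

theorem covering_number_le_of_symmetric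
    {n : ℕ} (K T : Set (Euc n)) (hK : IsConvexBody K) (hT : IsConvexBody T)
    (hTsym : T = -T) :
    (coveringNumber K T : ℝ≥0∞) ≤
      volume (K + (2 : ℝ)⁻¹ • T) / volume ((2 : ℝ)⁻¹ • T) := by
  classical
  set S : Set (Euc n) := (2 : ℝ)⁻¹ • T with hSdef
  have hScomp : IsCompact S := hT.2.1.smul _
  have hSmeas : MeasurableSet S := hScomp.measurableSet
  have hSpos : 0 < volume S := by
    refine (IsOpen.measure_pos volume isOpen_interior ?_).trans_le
      (measure_mono interior_subset)
    rw [hSdef, interior_smul₀ (by norm_num : (2:ℝ)⁻¹ ≠ 0)]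
    exact hT.2.2.smul_set
  have hSfin : volume S < ⊤ := hScomp.measure_lt_top
  have hVfin : volume (K + S) < ⊤ := (hK.2.1.add hScomp).measure_lt_top
  -- S + S = T
  have hSS : S + S = T := by
    rw [hSdef, ← Convex.add_smul hT.1 (by norm_num) (by norm_num)]
    norm_num
  -- -S = S
  have hSsym : -S = S := by
    rw [hSdef, ← Set.smul_set_neg, ← hTsym]
  -- the packing predicate
  set P : Finset (Euc n) → Prop :=
    fun Λ => ↑Λ ⊆ K ∧ (↑Λ : Set (Euc n)).PairwiseDisjoint (fun x => x +ᵥ S) with hPdef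
  -- volume count
  have hcount : ∀ Λ : Finset (Euc n), P Λ →
      (Λ.card : ℝ≥0∞) * volume S ≤ volume (K + S) := by
    rintro Λ ⟨hΛK, hdisj⟩
    have h1 : volume (⋃ x ∈ Λ, x +ᵥ S) = ∑ x ∈ Λ, volume (x +ᵥ S) :=
      measure_biUnion_finset hdisj (fun x _ => hSmeas.const_vadd x)
    have h2 : ∑ x ∈ Λ, volume (x +ᵥ S) = (Λ.card : ℝ≥0∞) * volume S := by
      simp [measure_vadd]
    have h3 : (⋃ x ∈ Λ, x +ᵥ S) ⊆ K + S := by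
      intro y hy
      simp only [Set.mem_iUnion] at hy
      obtain ⟨x, hxΛ, hy⟩ := hy
      obtain ⟨s, hs, rfl⟩ := hy
      exact ⟨x, hΛK hxΛ, s, hs, rfl⟩
    calc (Λ.card : ℝ≥0∞) * volume S = volume (⋃ x ∈ Λ, x +ᵥ S) := by rw [h1, h2]
      _ ≤ volume (K + S) := measure_mono h3
  -- uniform cardinality bound
  have hbdd : ∀ Λ : Finset (Euc n), P Λ →
      Λ.card ≤ ⌊(volume (K + S) / volume S).toReal⌋₊ := by
    intro Λ hΛ
    have h := (ENNReal.le_div_iff_mul_le (Or.inl hSpos.ne') (Or.inl hSfin.ne)).2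
      (hcount Λ hΛ)
    have hfin : volume (K + S) / volume S ≠ ⊤ :=
      (ENNReal.div_lt_top hVfin.ne hSpos.ne').ne
    refine Nat.le_floor ?_
    have := ENNReal.toReal_mono hfin h
    simpa using this
  -- pick a maximal packing
  have hPempty : P ∅ := ⟨by simp, by simp⟩
  set cards : Set ℕ := {m | ∃ Λ : Finset (Euc n), P Λ ∧ Λ.card = m} with hcards
  have hcne : cards.Nonempty := ⟨0, ∅, hPempty, rfl⟩
  have hcbdd : BddAbove cards := ⟨⌊(volume (K + S) / volume S).toReal⌋₊,
    by rintro m ⟨Λ, hΛ, rfl⟩; exact hbdd Λ hΛ⟩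
  obtain ⟨Λ, hΛP, hΛcard⟩ : ∃ Λ : Finset (Euc n), P Λ ∧ Λ.card = sSup cards :=
    Nat.sSup_mem hcne hcbdd
  have hmax : ∀ Λ' : Finset (Euc n), P Λ' → Λ'.card ≤ Λ.card := by
    intro Λ' hΛ'
    rw [hΛcard]
    exact le_csSup hcbdd ⟨Λ', hΛ', rfl⟩
  -- 0 ∈ T
  have hSne : S.Nonempty := by
    rcases hT.2.2 with ⟨x, hx⟩
    exact ⟨(2:ℝ)⁻¹ • x, Set.smul_mem_smul_set (interior_subset hx)⟩
  have h0T : (0 : Euc n) ∈ T := by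
    rcases hSne with ⟨s, hs⟩
    have hns : -s ∈ S := by rw [← hSsym]; exact Set.neg_mem_neg.2 hs
    rw [← hSS]
    exact ⟨s, hs, -s, hns, by simp⟩
  -- K is covered
  have hcover : K ⊆ ↑Λ + T := by
    intro x hx
    by_cases hxΛ : x ∈ Λ
    · exact ⟨x, hxΛ, 0, h0T, by simp⟩
    · have hnotP : ¬ P (insert x Λ) := by
        intro hP
        have := hmax _ hP
        rw [Finset.card_insert_of_notMem hxΛ] at this
        omega
      have hsub : ↑(insert x Λ) ⊆ K := by
        rw [Finset.coe_insert]
        exact Set.insert_subset hx hΛP.1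
      have hndisj : ¬ ((↑(insert x Λ) : Set (Euc n)).PairwiseDisjoint
          (fun y => y +ᵥ S)) := fun h => hnotP ⟨hsub, h⟩
      rw [Finset.coe_insert, Set.pairwiseDisjoint_insert] at hndisj
      push_neg at hndisj
      obtain ⟨y, hyΛ, hyx, hnd⟩ := hndisj hΛP.2
      obtain ⟨z, hz1, hz2⟩ := Set.not_disjoint_iff.1 hnd
      obtain ⟨s1, hs1, hz1⟩ := hz1
      obtain ⟨s2, hs2, hz2⟩ := hz2
      have heq : x + s1 = y + s2 := by
        have := hz1.trans hz2.symm
        simpa [vadd_eq_add] using this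
      rw [Set.mem_add]
      refine ⟨y, hyΛ, s2 + (-s1), ?_, ?_⟩
      · rw [← hSS]
        exact ⟨s2, hs2, -s1, by rw [← hSsym]; exact Set.neg_mem_neg.2 hs1, rfl⟩
      · calc y + (s2 + -s1) = (y + s2) + -s1 := by rw [add_assoc]
          _ = (x + s1) + -s1 := by rw [heq]
          _ = x := by abel
  -- conclude
  have h1 : coveringNumber K T ≤ (Λ.card : ℕ∞) := sInf_le ⟨Λ, rfl, hcover⟩
  calc (coveringNumber K T : ℝ≥0∞) ≤ ((Λ.card : ℕ∞) : ℝ≥0∞) := ENat.toENNReal_le.2 h1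
    _ = (Λ.card : ℝ≥0∞) := ENat.toENNReal_coe _
    _ ≤ volume (K + S) / volume S :=
      (ENNReal.le_div_iff_mul_le (Or.inl hSpos.ne') (Or.inl hSfin.ne)).2 (hcount Λ hΛP)
end
end

section
/- Let K ⊆ ℝ^n be a convex body whose centroid is at the origin, i.e. b(K) = 0. Then N(K-K, K) ≤ 24^n, where K-K = {x - y : x,y ∈ K} is the difference body of K. -/
open MeasureTheory Pointwise
open scoped ENNReal

noncomputable section

/-- The centroid (barycenter) of a set `K`. -/
def centroid {n : ℕ} (K : Set (Euc n)) : Euc n :=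
  (volume K).toReal⁻¹ • ∫ x in K, x

namespace RSproof

variable {n : ℕ}

lemma vol_smul (r : ℝ) (s : Set (Euc n)) :
    volume (r • s) = ENNReal.ofReal (|r| ^ n) * volume s := by
  rw [MeasureTheory.Measure.addHaar_smul volume r s, finrank_euclideanSpace_fin, abs_pow]

/-- Fubini identity no. 1: `∫ vol(K ∩ (x - K)) dx = vol(K)²`. -/
lemma lint_slices₁ (K : Set (Euc n)) (hKm : MeasurableSet K) :
    ∫⁻ x, volume (K ∩ (fun y => x - y) ⁻¹' K) = volume K * volume K := by
  have hmeas : Measurable (K.indicator (1 : Euc n → ℝ≥0∞)) :=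
    measurable_const.indicator hKm
  have hsub : ∀ x : Euc n, Measurable (fun y : Euc n => x - y) :=
    fun x => measurable_const.sub measurable_id
  have key : ∀ x : Euc n, volume (K ∩ (fun y => x - y) ⁻¹' K)
      = ∫⁻ y, K.indicator 1 y * K.indicator 1 (x - y) := by
    intro x
    rw [← lintegral_indicator_one (hKm.inter ((hsub x) hKm))]
    congr 1
    funext y
    by_cases h1 : y ∈ K <;> by_cases h2 : x - y ∈ K <;>
      simp [Set.indicator, h1, h2]
  simp_rw [key]
  rw [lintegral_lintegral_swap]
  · have inner : ∀ y : Euc n,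
        (∫⁻ x, K.indicator 1 y * K.indicator 1 (x - y)) = K.indicator 1 y * volume K := by
      intro y
      rw [lintegral_const_mul' _ _ (by by_cases h : y ∈ K <;> simp [Set.indicator, h])]
      congr 1
      rw [lintegral_sub_right_eq_self (K.indicator 1) y, lintegral_indicator_one hKm]
    simp_rw [inner]
    rw [lintegral_mul_const _ hmeas, lintegral_indicator_one hKm]
  · exact ((hmeas.comp measurable_snd).mul
      (hmeas.comp (measurable_fst.sub measurable_snd))).aemeasurable

/-- Fubini identity no. 2: `∫ vol(K ∩ (x + K)) dx = vol(K)²`. -/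
lemma lint_slices₂ (K : Set (Euc n)) (hKm : MeasurableSet K) :
    ∫⁻ x, volume (K ∩ (fun y => y - x) ⁻¹' K) = volume K * volume K := by
  have hmeas : Measurable (K.indicator (1 : Euc n → ℝ≥0∞)) :=
    measurable_const.indicator hKm
  have hsub : ∀ x : Euc n, Measurable (fun y : Euc n => y - x) :=
    fun x => measurable_id.sub_const x
  have key : ∀ x : Euc n, volume (K ∩ (fun y => y - x) ⁻¹' K)
      = ∫⁻ y, K.indicator 1 y * K.indicator 1 (y - x) := by
    intro x
    rw [← lintegral_indicator_one (hKm.inter ((hsub x) hKm))]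
    congr 1
    funext y
    by_cases h1 : y ∈ K <;> by_cases h2 : y - x ∈ K <;>
      simp [Set.indicator, h1, h2]
  simp_rw [key]
  rw [lintegral_lintegral_swap]
  · have inner : ∀ y : Euc n,
        (∫⁻ x, K.indicator 1 y * K.indicator 1 (y - x)) = K.indicator 1 y * volume K := by
      intro y
      rw [lintegral_const_mul' _ _ (by by_cases h : y ∈ K <;> simp [Set.indicator, h])]
      congr 1
      rw [(Measure.measurePreserving_sub_left volume y).lintegral_comp hmeas,
        lintegral_indicator_one hKm]
    simp_rw [inner]
    rw [lintegral_mul_const _ hmeas, lintegral_indicator_one hKm]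
  · exact ((hmeas.comp measurable_snd).mul
      (hmeas.comp (measurable_snd.sub measurable_fst))).aemeasurable


local instance : DecidableEq (Euc n) := Classical.decEq _

lemma ofReal_half_pow : ENNReal.ofReal (|(2:ℝ)⁻¹| ^ n) = ((2:ℝ≥0∞) ^ n)⁻¹ := by
  rw [abs_of_pos (by norm_num : (0:ℝ) < 2⁻¹), ENNReal.ofReal_pow (by norm_num),
    ENNReal.ofReal_inv_of_pos (by norm_num), ENNReal.ofReal_ofNat]
  exact ENNReal.inv_pow.symm ▸ rfl

/-- The packing-argument covering lemma. -/
lemma exists_cover (A M : Set (Euc n))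
    (hM2m : MeasurableSet ((2⁻¹:ℝ) • M))
    (hMconv : Convex ℝ M) (hMsym : ∀ m ∈ M, -m ∈ M) (hMne : M.Nonempty)
    (hv0 : volume ((2⁻¹:ℝ) • M) ≠ 0) (hBt : volume (A + (2⁻¹:ℝ) • M) ≠ ⊤) :
    ∃ Λ : Finset (Euc n), A ⊆ ↑Λ + M ∧
      (Λ.card : ℝ≥0∞) * volume ((2⁻¹:ℝ) • M) ≤ volume (A + (2⁻¹:ℝ) • M) := by
  set m₂ := (2⁻¹:ℝ) • M with hm₂
  have h0M : (0 : Euc n) ∈ M := by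
    obtain ⟨m, hm⟩ := hMne
    have := hMconv hm (hMsym m hm) (by norm_num) (by norm_num)
      (by norm_num : (2⁻¹:ℝ) + 2⁻¹ = 1)
    simpa using this
  have hhalf : ∀ u ∈ m₂, ∀ w ∈ m₂, w - u ∈ M := by
    rintro _ ⟨u, hu, rfl⟩ _ ⟨w, hw, rfl⟩
    have := hMconv hw (hMsym u hu) (by norm_num) (by norm_num)
      (by norm_num : (2⁻¹:ℝ) + 2⁻¹ = 1)
    simpa [smul_neg, sub_eq_add_neg] using this
  have hcard : ∀ Λ : Finset (Euc n), ↑Λ ⊆ A →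
      (↑Λ : Set (Euc n)).PairwiseDisjoint (fun l => l +ᵥ m₂) →
      (Λ.card : ℝ≥0∞) * volume m₂ ≤ volume (A + m₂) := by
    intro Λ hsub hdisj
    have hmeas : ∀ l ∈ Λ, MeasurableSet (l +ᵥ m₂) := fun l _ => hM2m.const_vadd l
    have hU : (⋃ l ∈ Λ, l +ᵥ m₂) ⊆ A + m₂ := by
      intro z hz
      simp only [Set.mem_iUnion] at hz
      obtain ⟨l, hl, hzl⟩ := hz
      obtain ⟨u, hu, rfl⟩ := hzl
      exact Set.mem_add.mpr ⟨l, hsub hl, u, hu, rfl⟩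
    calc (Λ.card : ℝ≥0∞) * volume m₂
        = ∑ _l ∈ Λ, volume m₂ := by rw [Finset.sum_const, nsmul_eq_mul]
      _ = ∑ l ∈ Λ, volume (l +ᵥ m₂) := by
          refine Finset.sum_congr rfl fun l _ => ?_
          rw [measure_vadd (μ := volume) l m₂]
      _ = volume (⋃ l ∈ Λ, l +ᵥ m₂) := (measure_biUnion_finset hdisj hmeas).symm
      _ ≤ volume (A + m₂) := measure_mono hU
  set Sc : Set ℕ := {k | ∃ Λ : Finset (Euc n),
    (↑Λ ⊆ A ∧ (↑Λ : Set (Euc n)).PairwiseDisjoint (fun l => l +ᵥ m₂)) ∧ Λ.card = k} with hSc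
  have hSne : Sc.Nonempty := ⟨0, ∅, ⟨by simp, by simp⟩, rfl⟩
  obtain ⟨N, hN⟩ := ENNReal.exists_nat_gt ((ENNReal.div_lt_top hBt hv0).ne)
  have hSbdd : BddAbove Sc := by
    refine ⟨N, ?_⟩
    rintro k ⟨Λ, ⟨hsub, hdisj⟩, rfl⟩
    have h1 : (Λ.card : ℝ≥0∞) ≤ volume (A + m₂) / volume m₂ :=
      (ENNReal.le_div_iff_mul_le (Or.inl hv0) (Or.inr hBt)).mpr (hcard Λ hsub hdisj)
    exact_mod_cast (h1.trans_lt hN).le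
  obtain ⟨Λ, ⟨hΛA, hΛd⟩, hΛcard⟩ := Nat.sSup_mem hSne hSbdd
  refine ⟨Λ, ?_, hcard Λ hΛA hΛd⟩
  intro a ha
  by_contra hnot
  have haΛ : a ∉ Λ := by
    intro h
    exact hnot (Set.mem_add.mpr ⟨a, Finset.mem_coe.mpr h, 0, h0M, add_zero a⟩)
  have hdisj' : ∀ l ∈ (↑Λ : Set (Euc n)), a ≠ l → Disjoint (a +ᵥ m₂) (l +ᵥ m₂) := by
    intro l hl _
    rw [Set.disjoint_left]
    rintro z hz1 hz2
    obtain ⟨u, hu, rfl⟩ := hz1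
    obtain ⟨w, hw, hwz⟩ := hz2
    refine hnot (Set.mem_add.mpr ⟨l, hl, w - u, hhalf u hu w hw, ?_⟩)
    have h : l + w = a + u := hwz
    rw [← add_sub_assoc, h, add_sub_cancel_right]
  have hmem : Λ.card + 1 ∈ Sc := by
    refine ⟨insert a Λ, ⟨?_, ?_⟩, by rw [Finset.card_insert_of_notMem haΛ]⟩
    · rw [Finset.coe_insert]
      exact Set.insert_subset ha hΛA
    · rw [Finset.coe_insert]
      exact hΛd.insert fun l hl hne => hdisj' l hl hne
  have hle : Λ.card + 1 ≤ sSup Sc := le_csSup hSbdd hmem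
  omega


/-- Existence of a point with large symmetric intersection. -/
lemma exists_center (K : Set (Euc n)) (hn : n ≠ 0) (hconv : Convex ℝ K)
    (hKm : MeasurableSet K) (hK2m : MeasurableSet (K + K))
    (hV0 : volume K ≠ 0) (hVt : volume K ≠ ⊤) :
    ∃ x₀ : Euc n, 5 ^ n * volume K ≤ 12 ^ n * volume (K ∩ (fun y => x₀ - y) ⁻¹' K) := by
  by_contra h
  push_neg at h
  set V := volume K with hV
  set c : ℝ≥0∞ := ((12:ℝ≥0∞) ^ n)⁻¹ * (5 ^ n * V) with hc
  have h12 : ((12:ℝ≥0∞) ^ n) ≠ 0 := pow_ne_zero n (by norm_num)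
  have h12t : ((12:ℝ≥0∞) ^ n) ≠ ⊤ := ENNReal.pow_ne_top (by norm_num)
  have hpt : ∀ x : Euc n, volume (K ∩ (fun y => x - y) ⁻¹' K)
      ≤ (K + K).indicator (fun _ => c) x := by
    intro x
    by_cases hx : x ∈ K + K
    · rw [Set.indicator_of_mem hx]
      have h1 : volume (K ∩ (fun y => x - y) ⁻¹' K)
          = ((12:ℝ≥0∞) ^ n)⁻¹ * (12 ^ n * volume (K ∩ (fun y => x - y) ⁻¹' K)) := by
        rw [← mul_assoc, ENNReal.inv_mul_cancel h12 h12t, one_mul]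
      rw [h1, hc]
      exact mul_le_mul_right (h x).le _
    · rw [Set.indicator_of_notMem hx]
      have : K ∩ (fun y => x - y) ⁻¹' K = ∅ := by
        rw [Set.eq_empty_iff_forall_notMem]
        rintro y ⟨hy, hy2⟩
        have hy2' : x - y ∈ K := hy2
        exact hx (by simpa using Set.add_mem_add hy hy2')
      simp [this]
  have hint : V * V ≤ c * volume (K + K) := by
    rw [← lint_slices₁ K hKm]
    calc ∫⁻ x, volume (K ∩ (fun y => x - y) ⁻¹' K)
        ≤ ∫⁻ x, (K + K).indicator (fun _ => c) x := lintegral_mono hpt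
      _ = c * volume (K + K) := by
          rw [lintegral_indicator_const hK2m]
  have hKK : K + K = (2:ℝ) • K := by
    have h := hconv.add_smul (by norm_num : (0:ℝ) ≤ 1) (by norm_num : (0:ℝ) ≤ 1)
    rw [one_smul] at h
    norm_num at h
    exact h.symm
  have hvol2 : volume (K + K) = 2 ^ n * V := by
    rw [hKK, vol_smul]
    congr 1
    rw [abs_of_pos (by norm_num : (0:ℝ) < 2), ENNReal.ofReal_pow (by norm_num),
      ENNReal.ofReal_ofNat]
  -- V * V ≤ (12^n)⁻¹ * 5^n * V * 2^n * V
  have key : 12 ^ n * (V * V) ≤ 10 ^ n * (V * V) := by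
    have h2 : V * V ≤ ((12:ℝ≥0∞) ^ n)⁻¹ * (10 ^ n * (V * V)) := by
      calc V * V ≤ c * (2 ^ n * V) := by rw [← hvol2]; exact hint
        _ = ((12:ℝ≥0∞) ^ n)⁻¹ * ((5 ^ n * 2 ^ n) * (V * V)) := by rw [hc]; ring
        _ = ((12:ℝ≥0∞) ^ n)⁻¹ * (10 ^ n * (V * V)) := by
            rw [show (5:ℝ≥0∞) ^ n * 2 ^ n = 10 ^ n by rw [← mul_pow]; norm_num]
    calc (12:ℝ≥0∞) ^ n * (V * V) ≤ 12 ^ n * (((12:ℝ≥0∞) ^ n)⁻¹ * (10 ^ n * (V * V))) :=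
          mul_le_mul_right h2 _
      _ = 10 ^ n * (V * V) := by rw [← mul_assoc, ENNReal.mul_inv_cancel h12 h12t, one_mul]
  have hVV0 : V * V ≠ 0 := mul_ne_zero hV0 hV0
  have hVVt : V * V ≠ ⊤ := ENNReal.mul_ne_top hVt hVt
  have h1210 : (12:ℝ≥0∞) ^ n ≤ 10 ^ n :=
    (ENNReal.mul_le_mul_iff_left hVV0 hVVt).mp key
  have : (12:ℕ) ^ n ≤ 10 ^ n := by exact_mod_cast h1210
  have := Nat.pow_lt_pow_left (by norm_num : 10 < 12) hn
  omega

/-- Weak Rogers–Shephard: `vol(K-K) ≤ 4^n vol(K)`. -/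
lemma diff_body_vol (K : Set (Euc n)) (hconv : Convex ℝ K)
    (hKm : MeasurableSet K) (hDm : MeasurableSet ((2⁻¹:ℝ) • (K - K)))
    (hV0 : volume K ≠ 0) (hVt : volume K ≠ ⊤) :
    volume (K - K) ≤ 4 ^ n * volume K := by
  set V := volume K with hV
  set W := volume (K - K) with hW
  set D := (2⁻¹:ℝ) • (K - K) with hD
  have h2 : ((2:ℝ≥0∞) ^ n) ≠ 0 := pow_ne_zero n (by norm_num)
  have h2t : ((2:ℝ≥0∞) ^ n) ≠ ⊤ := ENNReal.pow_ne_top (by norm_num)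
  have hpt : ∀ x : Euc n, D.indicator (fun _ => ((2:ℝ≥0∞) ^ n)⁻¹ * V) x
      ≤ volume (K ∩ (fun y => y - x) ⁻¹' K) := by
    intro x
    by_cases hx : x ∈ D
    · rw [Set.indicator_of_mem hx]
      obtain ⟨w, hw, rfl⟩ := hx
      obtain ⟨a, ha, b, hb, rfl⟩ := Set.mem_sub.mp hw
      have hsub : ((2⁻¹:ℝ) • a) +ᵥ ((2⁻¹:ℝ) • K) ⊆ K ∩ (fun y => y - (2⁻¹:ℝ) • (a - b)) ⁻¹' K := by
        rintro _ ⟨_, ⟨k, hk, rfl⟩, rfl⟩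
        constructor
        · have := hconv ha hk (by norm_num) (by norm_num) (by norm_num : (2⁻¹:ℝ) + 2⁻¹ = 1)
          simpa [vadd_eq_add, add_comm] using this
        · show ((2⁻¹:ℝ) • a +ᵥ (2⁻¹:ℝ) • k) - (2⁻¹:ℝ) • (a - b) ∈ K
          have heq : ((2⁻¹:ℝ) • a +ᵥ (2⁻¹:ℝ) • k) - (2⁻¹:ℝ) • (a - b)
              = (2⁻¹:ℝ) • b + (2⁻¹:ℝ) • k := by
            simp only [vadd_eq_add, smul_sub]
            abel
          rw [heq]
          exact hconv hb hk (by norm_num) (by norm_num) (by norm_num : (2⁻¹:ℝ) + 2⁻¹ = 1)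
      calc ((2:ℝ≥0∞) ^ n)⁻¹ * V = volume (((2⁻¹:ℝ) • a) +ᵥ ((2⁻¹:ℝ) • K)) := by
            rw [measure_vadd (μ := volume), vol_smul, ofReal_half_pow]
        _ ≤ _ := measure_mono hsub
    · rw [Set.indicator_of_notMem hx]
      exact zero_le
  have hint : ((2:ℝ≥0∞) ^ n)⁻¹ * V * volume D ≤ V * V := by
    rw [← lint_slices₂ K hKm]
    calc ((2:ℝ≥0∞) ^ n)⁻¹ * V * volume D
        = ∫⁻ x, D.indicator (fun _ => ((2:ℝ≥0∞) ^ n)⁻¹ * V) x := by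
          rw [lintegral_indicator_const hDm]
      _ ≤ ∫⁻ x, volume (K ∩ (fun y => y - x) ⁻¹' K) := lintegral_mono hpt
  have hvolD : volume D = ((2:ℝ≥0∞) ^ n)⁻¹ * W := by
    rw [hD, vol_smul, ofReal_half_pow, hW]
  rw [hvolD] at hint
  have key : V * W ≤ 4 ^ n * (V * V) := by
    have h4 : (4:ℝ≥0∞) ^ n = 2 ^ n * 2 ^ n := by rw [← mul_pow]; norm_num
    calc V * W = (2 ^ n * 2 ^ n) * (((2:ℝ≥0∞) ^ n)⁻¹ * V * (((2:ℝ≥0∞) ^ n)⁻¹ * W)) := by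
          rw [show (2 ^ n * 2 ^ n) * (((2:ℝ≥0∞) ^ n)⁻¹ * V * (((2:ℝ≥0∞) ^ n)⁻¹ * W))
            = (2 ^ n * ((2:ℝ≥0∞) ^ n)⁻¹) * (2 ^ n * ((2:ℝ≥0∞) ^ n)⁻¹) * (V * W) by ring]
          rw [ENNReal.mul_inv_cancel h2 h2t]
          ring
      _ ≤ (2 ^ n * 2 ^ n) * (V * V) := mul_le_mul_right hint _
      _ = 4 ^ n * (V * V) := by rw [h4]
  calc W = V⁻¹ * (V * W) := by rw [← mul_assoc, ENNReal.inv_mul_cancel hV0 hVt, one_mul]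
    _ ≤ V⁻¹ * (4 ^ n * (V * V)) := mul_le_mul_right key _
    _ = 4 ^ n * V := by
        rw [show V⁻¹ * (4 ^ n * (V * V)) = (V⁻¹ * V) * (4 ^ n * V) by ring,
          ENNReal.inv_mul_cancel hV0 hVt, one_mul]


end RSproof

open RSproof in
theorem covering_number_difference_body_le
    {n : ℕ} (K : Set (Euc n)) (hK : IsConvexBody K)
    (hcent : centroid K = 0) :
    coveringNumber (K - K) K ≤ 24 ^ n := by
  classical
  obtain ⟨hconv, hcomp, hint⟩ := hK
  have hKne : K.Nonempty := ⟨hint.choose, interior_subset hint.choose_spec⟩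
  rcases eq_or_ne n 0 with hn | hn
  · subst hn
    haveI : Subsingleton (Euc 0) := ⟨fun a b => by ext i; exact i.elim0⟩
    obtain ⟨x, hx⟩ := hKne
    have hle : coveringNumber (K - K) K ≤ (({0} : Finset (Euc 0)).card : ℕ∞) := by
      apply sInf_le
      refine ⟨{0}, rfl, fun z hz => ?_⟩
      exact Set.mem_add.mpr ⟨0, by simp, x, hx, Subsingleton.elim _ _⟩
    simpa using hle
  -- main case
  have hKm : MeasurableSet K := hcomp.isClosed.measurableSet
  set V := volume K with hV
  have hV0 : V ≠ 0 := (Measure.measure_pos_of_nonempty_interior volume hint).ne'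
  have hVt : V ≠ ⊤ := hcomp.measure_lt_top.ne
  have hK2m : MeasurableSet (K + K) := (hcomp.add hcomp).isClosed.measurableSet
  -- difference body
  set A := K - K with hA
  have hAcomp : IsCompact A := by
    rw [hA, sub_eq_add_neg]
    exact hcomp.add hcomp.neg
  have hAconv : Convex ℝ A := hconv.sub hconv
  have hDm : MeasurableSet ((2⁻¹:ℝ) • A) :=
    (hAcomp.smul (2⁻¹:ℝ)).isClosed.measurableSet
  set W := volume A with hW
  have hWle : W ≤ 4 ^ n * V := diff_body_vol K hconv hKm hDm hV0 hVt
  -- good center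
  obtain ⟨x₀, hx₀⟩ := exists_center K hn hconv hKm hK2m hV0 hVt
  set S := K ∩ (fun y => x₀ - y) ⁻¹' K with hS
  have hScomp : IsCompact S :=
    hcomp.inter_right (hcomp.isClosed.preimage (continuous_const.sub continuous_id))
  set c : Euc n := (2⁻¹:ℝ) • x₀ with hc
  set M := (-c) +ᵥ S with hM
  have hMvol : volume M = volume S := measure_vadd (μ := volume) (-c) S
  have hMcomp : IsCompact M := by
    have : M = (fun y => -c + y) '' S := rfl
    rw [this]
    exact hScomp.image (continuous_const.add continuous_id)
  have hM2m : MeasurableSet ((2⁻¹:ℝ) • M) :=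
    (hMcomp.smul (2⁻¹:ℝ)).isClosed.measurableSet
  have hMconv : Convex ℝ M := by
    apply Convex.vadd
    refine hconv.inter ?_
    have hpre : (fun y : Euc n => x₀ - y) ⁻¹' K = x₀ +ᵥ (-K) := by
      ext y
      simp only [Set.mem_preimage, Set.mem_vadd_set, Set.mem_neg, vadd_eq_add]
      constructor
      · intro h
        refine ⟨y - x₀, ?_, by abel⟩
        rw [neg_sub]; exact h
      · rintro ⟨z, hz, hzy⟩
        have : x₀ - y = -z := by rw [← hzy]; abel
        rw [this]; exact hz
    rw [hpre]
    exact (hconv.neg).vadd x₀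
  have hMsym : ∀ m ∈ M, -m ∈ M := by
    rintro _ ⟨s, hs, rfl⟩
    refine ⟨x₀ - s, ⟨hs.2, by simpa using hs.1⟩, ?_⟩
    have h2c : c + c = x₀ := by
      rw [hc, ← add_smul]
      norm_num
    show (-c) +ᵥ (x₀ - s) = -((-c) +ᵥ s)
    simp only [vadd_eq_add]
    rw [← h2c]
    abel
  have hSvol : 5 ^ n * V ≤ 12 ^ n * volume S := hx₀
  have hSv0 : volume S ≠ 0 := by
    intro h0
    rw [h0, mul_zero, nonpos_iff_eq_zero] at hSvol
    rcases mul_eq_zero.mp hSvol with h5 | hV'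
    · exact absurd h5 (pow_ne_zero n (by norm_num))
    · exact hV0 hV'
  have hMne : M.Nonempty := by
    rcases S.eq_empty_or_nonempty with h | h
    · exact absurd (by rw [h]; simp : volume S = 0) hSv0
    · obtain ⟨s, hs⟩ := h
      exact ⟨-c + s, ⟨s, hs, rfl⟩⟩
  -- M sits inside (1/2)(K-K)
  have hMsubA : M ⊆ (2⁻¹:ℝ) • A := by
    rintro _ ⟨s, hs, rfl⟩
    refine ⟨s - (x₀ - s), Set.sub_mem_sub hs.1 (hs.2 : x₀ - s ∈ K), ?_⟩
    show (2⁻¹:ℝ) • (s - (x₀ - s)) = -c +ᵥ s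
    simp only [vadd_eq_add, hc]
    module
  have hM2A : (2⁻¹:ℝ) • M ⊆ (4⁻¹:ℝ) • A := by
    intro z hz
    have := Set.smul_set_mono (a := (2⁻¹:ℝ)) hMsubA hz
    rwa [smul_smul, show (2⁻¹:ℝ) * 2⁻¹ = 4⁻¹ by norm_num] at this
  have h54 : A + (4⁻¹:ℝ) • A = ((5:ℝ)/4) • A := by
    have h := hAconv.add_smul (by norm_num : (0:ℝ) ≤ 1) (by norm_num : (0:ℝ) ≤ 4⁻¹)
    rw [one_smul] at h
    norm_num at h ⊢
    rw [← h]
  have hcover_sub : A + (2⁻¹:ℝ) • M ⊆ ((5:ℝ)/4) • A := by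
    rw [← h54]
    exact Set.add_subset_add_left hM2A
  have hBt : volume (A + (2⁻¹:ℝ) • M) ≠ ⊤ :=
    ((measure_mono hcover_sub).trans_lt ((hAcomp.smul ((5:ℝ)/4)).measure_lt_top)).ne
  have hv : volume ((2⁻¹:ℝ) • M) = ((2:ℝ≥0∞) ^ n)⁻¹ * volume S := by
    rw [vol_smul, ofReal_half_pow, hMvol]
  have hv0 : volume ((2⁻¹:ℝ) • M) ≠ 0 := by
    rw [hv]
    exact mul_ne_zero (ENNReal.inv_ne_zero.mpr (ENNReal.pow_ne_top (by norm_num))) hSv0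
  obtain ⟨Λ, hcov, hbound⟩ := exists_cover A M hM2m hMconv hMsym hMne hv0 hBt
  -- arithmetic: card Λ ≤ 24 ^ n
  have h24 : ((24:ℝ≥0∞) ^ n) ≠ 0 := pow_ne_zero n (by norm_num)
  have h24t : ((24:ℝ≥0∞) ^ n) ≠ ⊤ := ENNReal.pow_ne_top (by norm_num)
  have h12 : ((12:ℝ≥0∞) ^ n) ≠ 0 := pow_ne_zero n (by norm_num)
  have h12t : ((12:ℝ≥0∞) ^ n) ≠ ⊤ := ENNReal.pow_ne_top (by norm_num)
  have hvlow : ((24:ℝ≥0∞) ^ n)⁻¹ * (5 ^ n * V) ≤ volume ((2⁻¹:ℝ) • M) := by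
    have hS' : ((12:ℝ≥0∞) ^ n)⁻¹ * (5 ^ n * V) ≤ volume S := by
      calc ((12:ℝ≥0∞) ^ n)⁻¹ * (5 ^ n * V) ≤ ((12:ℝ≥0∞) ^ n)⁻¹ * (12 ^ n * volume S) :=
            mul_le_mul_right hx₀ _
        _ = volume S := by rw [← mul_assoc, ENNReal.inv_mul_cancel h12 h12t, one_mul]
    have hinv : ((24:ℝ≥0∞) ^ n)⁻¹ = ((2:ℝ≥0∞) ^ n)⁻¹ * ((12:ℝ≥0∞) ^ n)⁻¹ := by
      rw [← ENNReal.mul_inv (Or.inl (pow_ne_zero n (by norm_num))) (Or.inl (ENNReal.pow_ne_top (by norm_num))),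
        ← mul_pow]
      norm_num
    rw [hv, hinv, mul_assoc]
    exact mul_le_mul_right hS' _
  have hBhigh : volume (A + (2⁻¹:ℝ) • M) ≤ 5 ^ n * V := by
    have h1 : volume (((5:ℝ)/4) • A) = ENNReal.ofReal (|(5:ℝ)/4| ^ n) * W := by
      rw [vol_smul, hW]
    have h2 : ENNReal.ofReal (|(5:ℝ)/4| ^ n) * ((4:ℝ≥0∞) ^ n) = 5 ^ n := by
      rw [show ((4:ℝ≥0∞)) ^ n = ENNReal.ofReal ((4:ℝ) ^ n) by
          rw [ENNReal.ofReal_pow (by norm_num), ENNReal.ofReal_ofNat],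
        ← ENNReal.ofReal_mul (by positivity),
        show (|(5:ℝ)/4| ^ n * (4:ℝ) ^ n) = (5:ℝ) ^ n by
          rw [abs_of_pos (by norm_num), ← mul_pow]; norm_num,
        ENNReal.ofReal_pow (by norm_num), ENNReal.ofReal_ofNat]
    calc volume (A + (2⁻¹:ℝ) • M) ≤ volume (((5:ℝ)/4) • A) := measure_mono hcover_sub
      _ = ENNReal.ofReal (|(5:ℝ)/4| ^ n) * W := h1
      _ ≤ ENNReal.ofReal (|(5:ℝ)/4| ^ n) * (4 ^ n * V) := mul_le_mul_right hWle _
      _ = (ENNReal.ofReal (|(5:ℝ)/4| ^ n) * 4 ^ n) * V := by ring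
      _ = 5 ^ n * V := by rw [h2]
  have hE0 : (5:ℝ≥0∞) ^ n * V ≠ 0 := mul_ne_zero (pow_ne_zero n (by norm_num)) hV0
  have hEt : (5:ℝ≥0∞) ^ n * V ≠ ⊤ := ENNReal.mul_ne_top (ENNReal.pow_ne_top (by norm_num)) hVt
  have hkey : (Λ.card : ℝ≥0∞) * ((24:ℝ≥0∞) ^ n)⁻¹ * (5 ^ n * V) ≤ 1 * (5 ^ n * V) := by
    rw [mul_assoc, one_mul]
    calc (Λ.card : ℝ≥0∞) * (((24:ℝ≥0∞) ^ n)⁻¹ * (5 ^ n * V))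
        ≤ (Λ.card : ℝ≥0∞) * volume ((2⁻¹:ℝ) • M) := mul_le_mul_right hvlow _
      _ ≤ volume (A + (2⁻¹:ℝ) • M) := hbound
      _ ≤ 5 ^ n * V := hBhigh
  have hcard24 : (Λ.card : ℝ≥0∞) ≤ 24 ^ n := by
    have h1 : (Λ.card : ℝ≥0∞) * ((24:ℝ≥0∞) ^ n)⁻¹ ≤ 1 :=
      (ENNReal.mul_le_mul_iff_left hE0 hEt).mp hkey
    calc (Λ.card : ℝ≥0∞) = (Λ.card : ℝ≥0∞) * ((24:ℝ≥0∞) ^ n)⁻¹ * 24 ^ n := by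
          rw [mul_assoc, ENNReal.inv_mul_cancel h24 h24t, mul_one]
      _ ≤ 1 * 24 ^ n := mul_le_mul_left h1 _
      _ = 24 ^ n := one_mul _
  have hcardN : Λ.card ≤ 24 ^ n := by
    have : ((Λ.card : ℕ) : ℝ≥0∞) ≤ ((24 ^ n : ℕ) : ℝ≥0∞) := by push_cast; exact hcard24
    exact_mod_cast this
  -- final covering by translates of K
  set Λ₁ : Finset (Euc n) := Λ.image (fun l => l + -c) with hΛ₁
  have hcovK : K - K ⊆ ↑Λ₁ + K := by
    intro z hz
    obtain ⟨l, hl, m, hm, rfl⟩ := Set.mem_add.mp (hcov hz)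
    obtain ⟨s, hs, rfl⟩ := hm
    refine Set.mem_add.mpr ⟨l + -c, ?_, s, hs.1, ?_⟩
    · exact Finset.mem_coe.mpr (Finset.mem_image_of_mem _ hl)
    · show l + -c + s = l + (-c +ᵥ s)
      simp only [vadd_eq_add]
      abel
  have hfin : coveringNumber (K - K) K ≤ (Λ₁.card : ℕ∞) := sInf_le ⟨Λ₁, rfl, hcovK⟩
  refine hfin.trans ?_
  have : Λ₁.card ≤ 24 ^ n := Finset.card_image_le.trans hcardN
  calc (Λ₁.card : ℕ∞) ≤ ((24 ^ n : ℕ) : ℕ∞) := Nat.cast_le.mpr this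
    _ = (24:ℕ∞) ^ n := by push_cast; rfl

end
end

section
/- Let K ⊆ ℝ^n be a convex body, ε > 0, and s ∈ ℝ^n such that sup_{x ∈ K} ⟨s,x⟩ ≤ εn and |⟨s, b(K)⟩| ≤ ε, where b(K) is the centroid of K. Then L_{f_s}^{2n} ≤ (e^{2(n+1)ε} / vol(K)²) · det(cov(f_s)). -/
open MeasureTheory Pointwise
open scoped ENNReal RealInnerProductSpace

noncomputable section

/-- The exponential reweighting `f_s` of the uniform density on `K`:
`f_s(x) = exp ⟨s,x⟩` on `K` and `0` elsewhere. -/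
def expWeight {n : ℕ} (K : Set (Euc n)) (s : Euc n) (x : Euc n) : ℝ :=
  Set.indicator K (fun y => Real.exp ⟪s, y⟫) x

/-- The centroid (barycenter) of a density `f`. -/
def funCentroid {n : ℕ} (f : Euc n → ℝ) : Euc n :=
  (∫ x, f x)⁻¹ • ∫ x, f x • x

/-- The covariance matrix of a density `f`. -/
def funCov {n : ℕ} (f : Euc n → ℝ) : Matrix (Fin n) (Fin n) ℝ :=
  Matrix.of ((∫ x, f x)⁻¹ •
    ∫ x, fun i j => f x * ((x i - funCentroid f i) * (x j - funCentroid f j)))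

/-- The inertial ellipsoid of a density `f`. -/
def funEllipsoid {n : ℕ} (f : Euc n → ℝ) : Set (Euc n) :=
  {x | ∑ i, ∑ j, x i * (funCov f)⁻¹ i j * x j ≤ 1}

/-- The isotropic constant of a density `f` in dimension `n`. -/
def isotropicConstant {n : ℕ} (f : Euc n → ℝ) : ℝ :=
  ((⨆ x, f x) / ∫ x, f x) ^ ((n : ℝ)⁻¹) * (funCov f).det ^ ((2 * (n : ℝ))⁻¹)

-- PSD of the covariance matrix, and nonneg det
lemma funCov_det_nonneg {n : ℕ} (K : Set (Euc n)) (hK : IsConvexBody K) (s : Euc n) :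
    0 ≤ (funCov (expWeight K s)).det := by
  set f := expWeight K s with hf
  set b := funCentroid f with hb
  set G : Euc n → (Fin n → Fin n → ℝ) :=
    fun x i j => f x * ((x i - b i) * (x j - b j)) with hG
  have hKmeas : MeasurableSet K := hK.2.1.isClosed.measurableSet
  have hGind : G = Set.indicator K
      (fun x i j => Real.exp ⟪s, x⟫ * ((x i - b i) * (x j - b j))) := by
    funext x
    by_cases hx : x ∈ K
    · simp [hG, hf, expWeight, Set.indicator_of_mem hx]
    · simp [hG, hf, expWeight, Set.indicator_of_notMem hx]
      rfl
  have hcont : Continuous (fun x : Euc n => (fun i j =>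
      Real.exp ⟪s, x⟫ * ((x i - b i) * (x j - b j)) : Fin n → Fin n → ℝ)) := by
    refine continuous_pi fun i => continuous_pi fun j => ?_
    exact (Real.continuous_exp.comp (continuous_const.inner continuous_id)).mul
      (((((continuous_apply i).comp (PiLp.continuous_ofLp (p := 2) (β := fun _ : Fin n => ℝ)))).sub continuous_const).mul
        ((((continuous_apply j).comp (PiLp.continuous_ofLp (p := 2) (β := fun _ : Fin n => ℝ)))).sub continuous_const))
  have hGint : Integrable G := by
    rw [hGind]
    exact (hcont.continuousOn.integrableOn_compact hK.2.1).integrable_indicator hKmeas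
  have hGijint : ∀ i j, Integrable (fun x => G x i j) := by
    intro i j
    have hcij : Continuous (fun x : Euc n =>
        Real.exp ⟪s, x⟫ * ((x i - b i) * (x j - b j))) :=
      (Real.continuous_exp.comp (continuous_const.inner continuous_id)).mul
        (((((continuous_apply i).comp (PiLp.continuous_ofLp (p := 2) (β := fun _ : Fin n => ℝ)))).sub continuous_const).mul
          ((((continuous_apply j).comp (PiLp.continuous_ofLp (p := 2) (β := fun _ : Fin n => ℝ)))).sub continuous_const))
    have : (fun x => G x i j) = Set.indicator K
        (fun x => Real.exp ⟪s, x⟫ * ((x i - b i) * (x j - b j))) := by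
      funext x
      by_cases hx : x ∈ K <;>
        simp [hG, hf, expWeight, Set.indicator_of_mem, Set.indicator_of_notMem, hx]
    rw [this]
    exact (hcij.continuousOn.integrableOn_compact hK.2.1).integrable_indicator hKmeas
  set I := ∫ x, f x with hI
  have hCij : ∀ i j, funCov f i j = I⁻¹ * ∫ x, G x i j := by
    intro i j
    have h1 : (∫ x, G x) i = ∫ x, G x i :=
      ((ContinuousLinearMap.proj (R := ℝ) (φ := fun _ : Fin n => Fin n → ℝ)
        i).integral_comp_comm hGint).symm
    have hGi : Integrable (fun x => G x i) :=
      (ContinuousLinearMap.proj (R := ℝ) (φ := fun _ : Fin n => Fin n → ℝ)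
        i).integrable_comp hGint
    have h2 : (∫ x, G x i) j = ∫ x, G x i j :=
      ((ContinuousLinearMap.proj (R := ℝ) (φ := fun _ : Fin n => ℝ)
        j).integral_comp_comm hGi).symm
    show (I⁻¹ • ∫ x, G x) i j = _
    rw [Pi.smul_apply, Pi.smul_apply, h1, h2, smul_eq_mul]
  have hfnonneg : ∀ x, 0 ≤ f x := by
    intro x
    rw [hf]
    unfold expWeight
    exact Set.indicator_nonneg (fun y _ => (Real.exp_pos _).le) x
  have hInn : 0 ≤ I⁻¹ := inv_nonneg.2 (integral_nonneg hfnonneg)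
  have hPSD : (funCov f).PosSemidef := by
    rw [Matrix.posSemidef_iff_dotProduct_mulVec]
    constructor
    · -- Hermitian
      ext i j
      rw [Matrix.conjTranspose_apply, RCLike.star_def, RCLike.conj_to_real, hCij, hCij]
      have : (fun x => G x j i) = (fun x => G x i j) := by
        funext x; simp only [hG]; ring
      rw [this]
    · intro v
      have hsq : ∀ x, ∑ i, ∑ j, v i * G x i j * v j
          = f x * (∑ i, v i * (x i - b i)) ^ 2 := by
        intro x
        rw [sq, Finset.sum_mul_sum, Finset.mul_sum]
        refine Finset.sum_congr rfl fun i _ => ?_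
        rw [Finset.mul_sum]
        refine Finset.sum_congr rfl fun j _ => ?_
        simp only [hG]; ring
      have key : dotProduct (star v) ((funCov f).mulVec v) =
          I⁻¹ * ∫ x, f x * (∑ i, v i * (x i - b i)) ^ 2 := by
        simp only [star_trivial, dotProduct, Matrix.mulVec]
        calc ∑ i, v i * ∑ j, funCov f i j * v j
            = ∑ i, ∑ j, I⁻¹ * ∫ x, v i * G x i j * v j := by
              refine Finset.sum_congr rfl fun i _ => ?_
              rw [Finset.mul_sum]
              refine Finset.sum_congr rfl fun j _ => ?_
              rw [hCij]
              have : ∫ x, v i * G x i j * v j = v i * (∫ x, G x i j) * v j := by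
                rw [integral_mul_const, integral_const_mul]
              rw [this]; ring
          _ = I⁻¹ * ∫ x, ∑ i, ∑ j, v i * G x i j * v j := by
              simp_rw [← Finset.mul_sum]
              congr 1
              rw [integral_finset_sum]
              · exact Finset.sum_congr rfl fun i _ => (integral_finset_sum _
                  fun j _ => ((hGijint i j).const_mul _).mul_const _).symm
              · intro i _
                exact integrable_finset_sum _ fun j _ => ((hGijint i j).const_mul _).mul_const _
          _ = I⁻¹ * ∫ x, f x * (∑ i, v i * (x i - b i)) ^ 2 := by
              congr 1
              exact congrArg (fun g => ∫ x, g x) (funext hsq)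
      rw [key]
      exact mul_nonneg hInn (integral_nonneg fun x =>
        mul_nonneg (hfnonneg x) (sq_nonneg _))
  have := hPSD.1.det_eq_prod_eigenvalues
  rw [this]
  exact Finset.prod_nonneg fun i _ => by exact_mod_cast hPSD.eigenvalues_nonneg i

theorem isotropic_constant_pow_le_of_exp_reweighting
    {n : ℕ} (K : Set (Euc n)) (hK : IsConvexBody K)
    (ε : ℝ) (hε : 0 < ε) (s : Euc n)
    (hsup : ∀ x ∈ K, ⟪s, x⟫ ≤ ε * n)
    (hcent : |⟪s, centroid K⟫| ≤ ε) :
    isotropicConstant (expWeight K s) ^ (2 * n) ≤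
      Real.exp (2 * ((n : ℝ) + 1) * ε) / (volume K).toReal ^ 2 *
        (funCov (expWeight K s)).det := by
  have hKmeas : MeasurableSet K := hK.2.1.isClosed.measurableSet
  have hKne : K.Nonempty := hK.2.2.mono interior_subset
  have hvol0 : 0 < volume K :=
    lt_of_lt_of_le (isOpen_interior.measure_pos volume hK.2.2) (measure_mono interior_subset)
  set v := (volume K).toReal with hv
  have hvpos : 0 < v := ENNReal.toReal_pos hvol0.ne' hK.2.1.measure_lt_top.ne
  set f := expWeight K s with hf
  have hfnonneg : ∀ x, 0 ≤ f x := fun x =>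
    Set.indicator_nonneg (fun y _ => (Real.exp_pos _).le) x
  have hdet : 0 ≤ (funCov f).det := funCov_det_nonneg K hK s
  rcases Nat.eq_zero_or_pos n with hn | hn
  · subst hn
    rw [mul_zero, pow_zero, Matrix.det_fin_zero, mul_one, le_div_iff₀ (by positivity)]
    have hvK1 : volume K ≤ 1 := by
      calc volume K ≤ volume (Set.univ : Set (Euc 0)) := measure_mono (Set.subset_univ K)
        _ = 1 := by rw [volume_euclideanSpace_eq_dirac]; simp
    have hv1 : v ≤ 1 := by
      rw [hv]
      calc (volume K).toReal ≤ (1 : ℝ≥0∞).toReal := ENNReal.toReal_mono (by simp) hvK1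
        _ = 1 := by simp
    have : v ^ 2 ≤ 1 := by nlinarith
    have h1 : (1 : ℝ) ≤ Real.exp (2 * ((0:ℕ) + (1:ℝ)) * ε) := by
      apply Real.one_le_exp; positivity
    push_cast at h1 ⊢
    nlinarith
  -- main case
  have hnne : (n : ℝ) ≠ 0 := (Nat.cast_pos.2 hn).ne'
  -- pointwise bound on f
  have hpt : ∀ x, f x ≤ Real.exp (ε * n) := by
    intro x
    by_cases hx : x ∈ K
    · rw [hf]; unfold expWeight
      rw [Set.indicator_of_mem hx]
      exact Real.exp_le_exp.2 (hsup x hx)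
    · rw [hf]; unfold expWeight
      rw [Set.indicator_of_notMem hx]
      exact (Real.exp_pos _).le
  have hbdd : BddAbove (Set.range f) := ⟨Real.exp (ε * n), by rintro _ ⟨x, rfl⟩; exact hpt x⟩
  have hsup' : (⨆ x, f x) ≤ Real.exp (ε * n) := ciSup_le hpt
  obtain ⟨x₀, hx₀⟩ := hKne
  have hsup0 : 0 ≤ ⨆ x, f x := (hfnonneg x₀).trans (le_ciSup hbdd x₀)
  -- integral identity
  have hIeq : ∫ x, f x = ∫ x in K, Real.exp ⟪s, x⟫ := by
    rw [hf]; unfold expWeight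
    exact integral_indicator hKmeas
  -- Jensen
  haveI : IsFiniteMeasure (volume.restrict K) :=
    ⟨by rw [Measure.restrict_apply_univ]; exact hK.2.1.measure_lt_top⟩
  haveI : NeZero (volume.restrict K) :=
    ⟨by
      intro h
      have h0 : volume K = 0 := by rw [← Measure.restrict_apply_univ, h]; simp
      exact hvol0.ne' h0⟩
  have hintid : Integrable (fun x : Euc n => x) (volume.restrict K) :=
    continuous_id.continuousOn.integrableOn_compact hK.2.1
  have hintinner : Integrable (fun x : Euc n => ⟪s, x⟫) (volume.restrict K) :=
    (continuous_const.inner continuous_id).continuousOn.integrableOn_compact hK.2.1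
  have hintexp : Integrable (fun x : Euc n => Real.exp ⟪s, x⟫) (volume.restrict K) :=
    (Real.continuous_exp.comp (continuous_const.inner continuous_id)).continuousOn.integrableOn_compact
      hK.2.1
  have hjensen :
      Real.exp (⨍ x, ⟪s, x⟫ ∂(volume.restrict K)) ≤ ⨍ x, Real.exp ⟪s, x⟫ ∂(volume.restrict K) :=
    convexOn_exp.map_average_le Real.continuous_exp.continuousOn isClosed_univ
      (Filter.Eventually.of_forall fun x => Set.mem_univ _) hintinner hintexp
  have havg1 : ⨍ x, ⟪s, x⟫ ∂(volume.restrict K) = ⟪s, centroid K⟫ := by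
    rw [average_eq, measureReal_restrict_apply_univ, measureReal_def, integral_inner hintid, centroid,
      real_inner_smul_right, smul_eq_mul]
  have havg2 : ⨍ x, Real.exp ⟪s, x⟫ ∂(volume.restrict K)
      = v⁻¹ * ∫ x in K, Real.exp ⟪s, x⟫ := by
    rw [average_eq, measureReal_restrict_apply_univ, measureReal_def, smul_eq_mul]
  rw [havg1, havg2] at hjensen
  have hc : -ε ≤ ⟪s, centroid K⟫ := (abs_le.1 hcent).1
  have hIlow : v * Real.exp (-ε) ≤ ∫ x, f x := by
    rw [hIeq]
    have h1 : Real.exp (-ε) ≤ v⁻¹ * ∫ x in K, Real.exp ⟪s, x⟫ :=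
      le_trans (Real.exp_le_exp.2 hc) hjensen
    have h2 := mul_le_mul_of_nonneg_left h1 hvpos.le
    calc v * Real.exp (-ε) ≤ v * (v⁻¹ * ∫ x in K, Real.exp ⟪s, x⟫) := h2
      _ = ∫ x in K, Real.exp ⟪s, x⟫ := by field_simp
  have hIpos : 0 < ∫ x, f x := lt_of_lt_of_le (by positivity) hIlow
  have hratio : (⨆ x, f x) / (∫ x, f x) ≤ Real.exp (((n : ℝ) + 1) * ε) / v := by
    rw [div_le_div_iff₀ hIpos hvpos]
    calc (⨆ x, f x) * v ≤ Real.exp (ε * n) * v := mul_le_mul_of_nonneg_right hsup' hvpos.le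
      _ = Real.exp (((n : ℝ) + 1) * ε) * (v * Real.exp (-ε)) := by
          rw [show Real.exp (((n:ℝ)+1)*ε) * (v * Real.exp (-ε))
              = (Real.exp (((n:ℝ)+1)*ε) * Real.exp (-ε)) * v from by ring,
            ← Real.exp_add, show ((n:ℝ)+1)*ε + -ε = ε * n from by ring]
      _ ≤ Real.exp (((n : ℝ) + 1) * ε) * ∫ x, f x :=
          mul_le_mul_of_nonneg_left hIlow (Real.exp_pos _).le
  set a := (⨆ x, f x) / (∫ x, f x) with ha'
  have ha : 0 ≤ a := div_nonneg hsup0 hIpos.le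
  have hfinal : a ^ 2 ≤ Real.exp (2 * ((n : ℝ) + 1) * ε) / v ^ 2 := by
    calc a ^ 2 ≤ (Real.exp (((n : ℝ) + 1) * ε) / v) ^ 2 := by
          exact pow_le_pow_left₀ ha hratio 2
      _ = Real.exp (2 * ((n : ℝ) + 1) * ε) / v ^ 2 := by
          rw [div_pow, sq, ← Real.exp_add]
          congr 1
          ring
  have key : isotropicConstant f ^ (2 * n) = a ^ 2 * (funCov f).det := by
    rw [isotropicConstant, mul_pow,
      ← Real.rpow_natCast (a ^ ((n : ℝ)⁻¹)) (2 * n),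
      ← Real.rpow_natCast ((funCov f).det ^ ((2 * (n : ℝ))⁻¹)) (2 * n),
      ← Real.rpow_mul ha, ← Real.rpow_mul hdet,
      show ((n : ℝ)⁻¹ * ((2 * n : ℕ) : ℝ)) = 2 from by push_cast; field_simp,
      show ((2 * (n : ℝ))⁻¹ * ((2 * n : ℕ) : ℝ)) = 1 from by push_cast; field_simp,
      Real.rpow_one, show (2 : ℝ) = ((2 : ℕ) : ℝ) from by norm_num, Real.rpow_natCast]
  rw [key]
  exact mul_le_mul_of_nonneg_right hfinal hdet

end
end

section
/- Let K ⊆ ℝ^n be a convex body with 0 in its interior, let γ ≥ 1 satisfy vol(K ∩ -K) ≥ γ^{-n} · vol(K), let L ⊆ ℝ^n be a full-rank lattice, and let d > 0. Then for every x ∈ ℝ^n, the set (x + dK) ∩ L is finite of cardinality at most (γ·(1 + 2d/λ₁(K,L)))^n; in particular G(dK,L) ≤ (γ·(1 + 2d/λ₁(K,L)))^n. -/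
open MeasureTheory Pointwise
open scoped ENNReal

noncomputable section

/-- `λ₁(K, S)`: the infimum of the gauge (Minkowski functional) of `K`
over the nonzero points of `S`. -/
def lambdaOne {n : ℕ} (K : Set (Euc n)) (S : Set (Euc n)) : ℝ :=
  sInf (gauge K '' (S \ {0}))

/-- `G(K,L)`: the maximal number of lattice points in a translate of `K`. -/
def latticeG {n : ℕ} (K : Set (Euc n)) (L : Set (Euc n)) : ℕ∞ :=
  ⨆ x : Euc n, ((x +ᵥ K) ∩ L).encard

/-- Translates of the half-minimum-distance symmetrized body by distinct lattice
points are disjoint. -/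
lemma disjoint_translates {n : ℕ} (K : Set (Euc n)) (hKconv : Convex ℝ K)
    (L : AddSubgroup (Euc n)) (l : ℝ) (hl : 0 < l)
    (hlow : ∀ y ∈ L, y ≠ 0 → l ≤ gauge K y)
    (y₁ y₂ : Euc n) (h₁ : y₁ ∈ L) (h₂ : y₂ ∈ L) (hne : y₁ ≠ y₂) :
    Disjoint (y₁ +ᵥ (l/2) • interior (K ∩ -K)) (y₂ +ᵥ (l/2) • interior (K ∩ -K)) := by
  set U := interior (K ∩ -K) with hU
  have hCsymm : -(K ∩ -K) = K ∩ -K := Set.ext fun x => by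
    simp only [Set.mem_neg, Set.mem_inter_iff, neg_neg, and_comm]
  have hUK : U ⊆ interior K := interior_mono Set.inter_subset_left
  have hUconv : Convex ℝ U := (hKconv.inter hKconv.neg).interior
  have hUsymm : ∀ u ∈ U, -u ∈ U := by
    intro u hu
    have key : ∀ s : Set (Euc n), -interior s = interior (-s) := fun s => by
      simpa [Set.image_neg_eq_neg] using ((Homeomorph.neg (Euc n)).image_interior s)
    have himg : -U = U := by rw [hU, key, hCsymm]
    rw [← himg]
    simpa using hu
  rw [Set.disjoint_left]
  rintro z hz1 hz2
  obtain ⟨u₁, hu₁, hz1'⟩ := hz1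
  obtain ⟨u₂, hu₂, hz2'⟩ := hz2
  obtain ⟨v₁, hv₁, rfl⟩ := hu₁
  obtain ⟨v₂, hv₂, rfl⟩ := hu₂
  simp only [vadd_eq_add] at hz1' hz2'
  have h : y₁ + (l/2) • v₁ = y₂ + (l/2) • v₂ := by rw [hz1', hz2']
  set w : Euc n := (1/2 : ℝ) • v₂ + (1/2 : ℝ) • (-v₁) with hwdef
  have hw : y₁ - y₂ = l • w := by
    have h2 : y₁ - y₂ = (l/2) • v₂ - (l/2) • v₁ :=
      sub_eq_sub_iff_add_eq_add.mpr (h.trans (add_comm _ _))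
    rw [h2, hwdef]
    module
  have hwU : w ∈ U := hUconv hv₂ (hUsymm v₁ hv₁) (by norm_num) (by norm_num) (by norm_num)
  have hglt : gauge K (y₁ - y₂) < l := by
    rw [hw, gauge_smul_of_nonneg hl.le]
    have : gauge K w < 1 := interior_subset_gauge_lt_one K (hUK hwU)
    calc l • gauge K w = l * gauge K w := rfl
    _ < l * 1 := by exact mul_lt_mul_of_pos_left this hl
    _ = l := mul_one l
  have := hlow (y₁ - y₂) (sub_mem h₁ h₂) (sub_ne_zero.mpr hne)
  linarith

theorem lattice_points_in_translate_le
    {n : ℕ} (K : Set (Euc n)) (hK : IsConvexBody K)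
    (h0K : (0 : Euc n) ∈ interior K)
    (γ : ℝ) (hγ : 1 ≤ γ)
    (hsym : ENNReal.ofReal (γ⁻¹ ^ n) * volume K ≤ volume (K ∩ -K))
    (L : AddSubgroup (Euc n)) (hdisc : DiscreteTopology L)
    (hfull : Submodule.span ℝ (L : Set (Euc n)) = ⊤)
    (d : ℝ) (hd : 0 < d) :
    (∀ x : Euc n, (((x +ᵥ d • K) ∩ (L : Set (Euc n))).encard : ℝ≥0∞) ≤
        ENNReal.ofReal ((γ * (1 + 2 * d / lambdaOne K L)) ^ n)) ∧
      (latticeG (d • K) (L : Set (Euc n)) : ℝ≥0∞) ≤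
        ENNReal.ofReal ((γ * (1 + 2 * d / lambdaOne K L)) ^ n) := by
  obtain ⟨hKconv, hKcomp, hKint⟩ := hK
  set l := lambdaOne K L with hldef
  set b := (γ * (1 + 2 * d / l)) ^ n with hbdef
  -- nonnegativity of l and b
  have hl0 : 0 ≤ l := Real.sInf_nonneg (by rintro x ⟨y, _, rfl⟩; exact gauge_nonneg _)
  have hb1 : (1 : ℝ) ≤ γ * (1 + 2 * d / l) := by
    have h2d : 0 ≤ 2 * d / l := by positivity
    nlinarith
  have hb0 : (0 : ℝ) ≤ b := by positivity
  -- the key cardinality bound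
  have key : ∀ x : Euc n, ((x +ᵥ d • K) ∩ (L : Set (Euc n))).encard ≤ (⌊b⌋₊ : ℕ∞) := by
    intro x
    -- the set is finite
    have hSfin : ((x +ᵥ d • K) ∩ (L : Set (Euc n))).Finite := by
      have hc : IsCompact (x +ᵥ d • K) := (hKcomp.smul d).vadd x
      have hLc : IsClosed (L : Set (Euc n)) := AddSubgroup.isClosed_of_discrete
      have hSd : DiscreteTopology ((x +ᵥ d • K) ∩ (L : Set (Euc n)) : Set (Euc n)) :=
        DiscreteTopology.of_subset hdisc Set.inter_subset_right
      exact (hc.inter_right hLc).finite (isDiscrete_iff_discreteTopology.mpr hSd)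
    rw [hSfin.encard_eq_coe_toFinset_card]
    rw [Nat.cast_le]
    apply Nat.le_floor
    -- handle the trivial case n = 0
    rcases Nat.eq_zero_or_pos n with hn | hn
    · subst hn
      have : Subsingleton (Euc 0) := by
        constructor; intro a b'; ext i; exact absurd i.2 (by omega)
      have hcard : hSfin.toFinset.card ≤ 1 := by
        apply Finset.card_le_one.mpr
        intro a ha b' hb'
        exact Subsingleton.elim a b'
      rw [hbdef, pow_zero]
      exact_mod_cast hcard
    -- now n ≥ 1
    have hEnontriv : Nontrivial (Euc n) := by
      have : 0 < Module.finrank ℝ (Euc n) := by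
        rw [finrank_euclideanSpace_fin]; exact hn
      exact Module.nontrivial_of_finrank_pos this
    -- there is a nonzero lattice point
    obtain ⟨y₀, hy₀, hy₀0⟩ : ∃ y ∈ L, y ≠ (0 : Euc n) := by
      by_contra hcon
      push_neg at hcon
      have : (L : Set (Euc n)) ⊆ {0} := fun y hy => hcon y hy
      have hspan : Submodule.span ℝ (L : Set (Euc n)) ≤ ⊥ := by
        rw [← Submodule.span_zero_singleton (M := Euc n) (R := ℝ)]
        exact Submodule.span_mono this
      rw [hfull] at hspan
      obtain ⟨v, hv⟩ := exists_ne (0 : Euc n)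
      exact hv (by simpa using hspan (Submodule.mem_top (x := v)))
    -- lower bound on norms of nonzero lattice points
    obtain ⟨ε, hε, hlb⟩ : ∃ ε > 0, ∀ y ∈ L, y ≠ 0 → ε ≤ ‖y‖ := by
      have h : IsOpen ({0} : Set L) := isOpen_discrete _
      rw [Metric.isOpen_iff] at h
      obtain ⟨ε, hε, hball⟩ := h 0 rfl
      refine ⟨ε, hε, fun y hy hy0 => ?_⟩
      by_contra hlt
      push_neg at hlt
      have : (⟨y, hy⟩ : L) ∈ Metric.ball (0 : L) ε := by
        simpa [Metric.mem_ball, dist_eq_norm] using hlt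
      have := hball this
      simp only [Set.mem_singleton_iff] at this
      exact hy0 (by simpa using congrArg Subtype.val this)
    -- l is positive
    have habs : Absorbent ℝ K := absorbent_nhds_zero (mem_interior_iff_mem_nhds.mp h0K)
    have hlpos : 0 < l := by
      obtain ⟨R, hR⟩ := hKcomp.isBounded.subset_closedBall 0
      have hR2 : (0:ℝ) < max R 1 + 1 := by positivity
      have hKsub : K ⊆ Metric.ball 0 (max R 1 + 1) := hR.trans <| by
        apply Metric.closedBall_subset_ball; linarith [le_max_left R 1]
      have hg : ∀ y : Euc n, y ∈ L → y ≠ 0 → ε / (max R 1 + 1) ≤ gauge K y := by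
        intro y hy hy0
        have h1 : gauge (Metric.ball (0 : Euc n) (max R 1 + 1)) y ≤ gauge K y :=
          gauge_mono habs hKsub y
        rw [gauge_ball hR2.le] at h1
        exact le_trans (by gcongr; exact hlb y hy hy0) h1
      have hne : (gauge K '' ((L : Set (Euc n)) \ {0})).Nonempty :=
        ⟨gauge K y₀, ⟨y₀, ⟨hy₀, hy₀0⟩, rfl⟩⟩
      have h3 : ε / (max R 1 + 1) ≤ l := by
        apply le_csInf hne
        rintro b' ⟨y, ⟨hy, hy0⟩, rfl⟩
        exact hg y hy (by simpa using hy0)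
      have : 0 < ε / (max R 1 + 1) := by positivity
      linarith
    have hlow : ∀ y ∈ L, y ≠ 0 → l ≤ gauge K y := by
      intro y hy hy0
      apply csInf_le ⟨0, by rintro x' ⟨y', _, rfl⟩; exact gauge_nonneg _⟩
      exact ⟨y, ⟨hy, hy0⟩, rfl⟩
    -- set up the packing argument
    set t := l / 2 with htdef
    have ht : 0 < t := by positivity
    set U := interior (K ∩ -K) with hUdef
    have hCconv : Convex ℝ (K ∩ -K) := hKconv.inter hKconv.neg
    have h0U : (0 : Euc n) ∈ U := by
      rw [hUdef, interior_inter]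
      refine ⟨h0K, ?_⟩
      have key2 : ∀ s : Set (Euc n), -interior s = interior (-s) := fun s => by
        simpa [Set.image_neg_eq_neg] using ((Homeomorph.neg (Euc n)).image_interior s)
      rw [← key2]
      simpa using h0K
    have hUopen : IsOpen U := isOpen_interior
    -- volume facts
    have hvolU : volume U = volume (K ∩ -K) := by
      refine le_antisymm (measure_mono interior_subset) ?_
      calc volume (K ∩ -K) ≤ volume (U ∪ frontier (K ∩ -K)) := by
            apply measure_mono
            intro z hz
            rcases (closure_eq_interior_union_frontier (K ∩ -K) ▸ subset_closure hz) with h | h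
            · exact Or.inl h
            · exact Or.inr h
        _ ≤ volume U + volume (frontier (K ∩ -K)) := measure_union_le _ _
        _ = volume U := by rw [hCconv.addHaar_frontier volume, add_zero]
      -- done
    have hvolK_pos : 0 < volume K :=
      lt_of_lt_of_le (hUopen.measure_pos volume ⟨0, h0U⟩)
        (measure_mono (interior_subset.trans Set.inter_subset_left))
    have hvolK_fin : volume K < ⊤ := hKcomp.measure_lt_top
    set F := hSfin.toFinset with hFdef
    have hFmem : ∀ y ∈ F, y ∈ (x +ᵥ d • K) ∩ (L : Set (Euc n)) := fun y hy =>
      hSfin.mem_toFinset.mp hy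
    -- disjointness
    have hdisj : (F : Set (Euc n)).PairwiseDisjoint (fun y => y +ᵥ t • U) := by
      intro y₁ hy₁ y₂ hy₂ hne12
      exact disjoint_translates K hKconv L l hlpos hlow y₁ y₂
        (hFmem y₁ hy₁).2 (hFmem y₂ hy₂).2 hne12
    have hmeas : ∀ y ∈ F, MeasurableSet (y +ᵥ t • U) :=
      fun y _ => ((hUopen.smul₀ ht.ne').vadd y).measurableSet
    -- inclusion into big body
    have hsub : ∀ y ∈ F, y +ᵥ t • U ⊆ x +ᵥ (d + t) • K := by
      intro y hy z hz
      obtain ⟨u, hu, rfl⟩ := hz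
      obtain ⟨v, hv, rfl⟩ := hu
      obtain ⟨k0, hk0, hk0y⟩ := (hFmem y hy).1
      obtain ⟨k, hk, rfl⟩ := hk0
      have hvK : v ∈ K := (interior_subset hv).1
      refine ⟨d • k + t • v, ?_, ?_⟩
      · rw [hKconv.add_smul hd.le ht.le]
        exact Set.add_mem_add ⟨k, hk, rfl⟩ ⟨v, hvK, rfl⟩
      · simp only [vadd_eq_add] at hk0y ⊢
        rw [← hk0y]; abel
    -- the volume computation
    have hfinrank : Module.finrank ℝ (Euc n) = n := finrank_euclideanSpace_fin
    have hchain : (F.card : ℝ≥0∞) * volume (t • U) ≤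
        ENNReal.ofReal ((d + t) ^ n) * volume K := by
      calc (F.card : ℝ≥0∞) * volume (t • U)
          = ∑ y ∈ F, volume (y +ᵥ t • U) := by
            rw [Finset.sum_congr rfl (fun y _ => measure_vadd _ _ _), Finset.sum_const,
              nsmul_eq_mul]
        _ = volume (⋃ y ∈ F, y +ᵥ t • U) := (measure_biUnion_finset hdisj hmeas).symm
        _ ≤ volume (x +ᵥ (d + t) • K) := by
            apply measure_mono
            exact Set.iUnion₂_subset hsub
        _ = volume ((d + t) • K) := measure_vadd _ _ _
        _ = ENNReal.ofReal ((d + t) ^ n) * volume K := by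
            rw [Measure.addHaar_smul_of_nonneg volume (by positivity), hfinrank]
    have hvol_tU : volume (t • U) = ENNReal.ofReal (t ^ n) * volume U := by
      rw [Measure.addHaar_smul_of_nonneg volume ht.le, hfinrank]
    have hvolU_ge : ENNReal.ofReal (γ⁻¹ ^ n) * volume K ≤ volume U := by
      rw [hvolU]; exact hsym
    -- combine
    have hmain : (F.card : ℝ≥0∞) * (ENNReal.ofReal (t ^ n * γ⁻¹ ^ n) * volume K) ≤
        ENNReal.ofReal ((d + t) ^ n) * volume K := by
      calc (F.card : ℝ≥0∞) * (ENNReal.ofReal (t ^ n * γ⁻¹ ^ n) * volume K)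
          = (F.card : ℝ≥0∞) * (ENNReal.ofReal (t ^ n) *
              (ENNReal.ofReal (γ⁻¹ ^ n) * volume K)) := by
            rw [ENNReal.ofReal_mul (by positivity), mul_assoc]
        _ ≤ (F.card : ℝ≥0∞) * (ENNReal.ofReal (t ^ n) * volume U) := by
            gcongr
        _ = (F.card : ℝ≥0∞) * volume (t • U) := by rw [hvol_tU]
        _ ≤ _ := hchain
    -- cancel volume K
    have hcancel : (F.card : ℝ≥0∞) * ENNReal.ofReal (t ^ n * γ⁻¹ ^ n) ≤
        ENNReal.ofReal ((d + t) ^ n) := by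
      rw [← ENNReal.mul_le_mul_iff_left hvolK_pos.ne' hvolK_fin.ne]
      calc (F.card : ℝ≥0∞) * ENNReal.ofReal (t ^ n * γ⁻¹ ^ n) * volume K
          = (F.card : ℝ≥0∞) * (ENNReal.ofReal (t ^ n * γ⁻¹ ^ n) * volume K) := by
            rw [mul_assoc]
        _ ≤ _ := hmain
    -- to the reals
    have hreal : (F.card : ℝ) * (t ^ n * γ⁻¹ ^ n) ≤ (d + t) ^ n := by
      rw [← ENNReal.ofReal_le_ofReal_iff (by positivity),
        ENNReal.ofReal_mul (by positivity)]
      rw [ENNReal.ofReal_natCast]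
      exact hcancel
    -- final algebra
    have hγ0 : (0 : ℝ) < γ := by linarith
    have hfact : (d + t) ^ n = (t ^ n * γ⁻¹ ^ n) * b := by
      rw [hbdef, ← mul_pow, ← mul_pow]
      congr 1
      rw [htdef]
      field_simp
      ring
    have hpos : 0 < t ^ n * γ⁻¹ ^ n := by positivity
    have : (F.card : ℝ) ≤ b := by
      rw [hfact] at hreal
      calc (F.card : ℝ) = (F.card : ℝ) * (t ^ n * γ⁻¹ ^ n) / (t ^ n * γ⁻¹ ^ n) := by
            field_simp
        _ ≤ (t ^ n * γ⁻¹ ^ n) * b / (t ^ n * γ⁻¹ ^ n) := by gcongr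
        _ = b := by field_simp
    exact this
  constructor
  · intro x
    calc (((x +ᵥ d • K) ∩ (L : Set (Euc n))).encard : ℝ≥0∞)
        ≤ ((⌊b⌋₊ : ℕ∞) : ℝ≥0∞) := by exact_mod_cast ENat.toENNReal_le.mpr (key x)
      _ = (⌊b⌋₊ : ℝ≥0∞) := by simp
      _ ≤ ENNReal.ofReal b := by
          rw [← ENNReal.ofReal_natCast]
          exact ENNReal.ofReal_le_ofReal (Nat.floor_le hb0)
  · have hG : latticeG (d • K) (L : Set (Euc n)) ≤ (⌊b⌋₊ : ℕ∞) := iSup_le key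
    calc (latticeG (d • K) (L : Set (Euc n)) : ℝ≥0∞)
        ≤ ((⌊b⌋₊ : ℕ∞) : ℝ≥0∞) := ENat.toENNReal_le.mpr hG
      _ = (⌊b⌋₊ : ℝ≥0∞) := by simp
      _ ≤ ENNReal.ofReal b := by
          rw [← ENNReal.ofReal_natCast]
          exact ENNReal.ofReal_le_ofReal (Nat.floor_le hb0)

end
end

section
/- Let K ⊆ ℝ^n be a convex body, let L ⊆ ℝ^n be a full-rank lattice, and let t > 0. Then G(tK, L) ≤ (4t + 2)^n · G(K, L). -/
open MeasureTheory Pointwise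
open scoped ENNReal

noncomputable section

lemma sect_mem {n : ℕ} {K : Set (Euc n)} (hconv : Convex ℝ K) {x y : Euc n}
    (hy : y ∈ K) (hy2 : (2:ℝ) • x - y ∈ K) : x ∈ K := by
  have h := hconv hy hy2 (by norm_num : (0:ℝ) ≤ 1/2) (by norm_num : (0:ℝ) ≤ 1/2) (by norm_num)
  have he : (1/2 : ℝ) • y + (1/2 : ℝ) • ((2:ℝ) • x - y) = x := by module
  rwa [he] at h

lemma exists_good_center {n : ℕ} {K : Set (Euc n)} (hconv : Convex ℝ K)
    (hcomp : IsCompact K) (hint : (interior K).Nonempty) :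
    ∃ x0 ∈ K, ENNReal.ofReal ((2:ℝ)⁻¹ ^ n) * volume K ≤
      volume {y : Euc n | y ∈ K ∧ (2:ℝ) • x0 - y ∈ K} := by
  have hKm : MeasurableSet K := hcomp.isClosed.measurableSet
  have hKpos : 0 < volume K := Measure.measure_pos_of_nonempty_interior _ hint
  have hKfin : volume K < ⊤ := hcomp.measure_lt_top
  set c : ℝ≥0∞ := ENNReal.ofReal ((2:ℝ)⁻¹ ^ n) * volume K with hc
  have hcpos : 0 < c := by
    apply ENNReal.mul_pos _ hKpos.ne'
    simp only [ne_eq, ENNReal.ofReal_eq_zero, not_le]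
    positivity
  have hcfin : c < ⊤ := ENNReal.mul_lt_top ENNReal.ofReal_lt_top hKfin
  set f : Euc n → ℝ≥0∞ := fun x => volume {y : Euc n | y ∈ K ∧ (2:ℝ) • x - y ∈ K} with hf
  suffices h : ∃ x0, c ≤ f x0 by
    obtain ⟨x0, hx0⟩ := h
    have hne : {y : Euc n | y ∈ K ∧ (2:ℝ) • x0 - y ∈ K}.Nonempty := by
      by_contra hne
      rw [Set.not_nonempty_iff_eq_empty] at hne
      have : f x0 = 0 := by rw [hf]; simp [hne]
      rw [this] at hx0
      exact hcpos.not_ge hx0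
    obtain ⟨y, hy1, hy2⟩ := hne
    exact ⟨x0, sect_mem hconv hy1 hy2, hx0⟩
  set A : Set (Euc n × Euc n) := {p | p.2 ∈ K ∧ (2:ℝ) • p.1 - p.2 ∈ K} with hA
  have hAm : MeasurableSet A := by
    have : A = (fun p : Euc n × Euc n => (p.2, (2:ℝ) • p.1 - p.2)) ⁻¹' (K ×ˢ K) := by
      ext p; simp [hA, Set.mem_prod]
    rw [this]
    exact (hKm.prod hKm).preimage (by fun_prop)
  have hsect : ∀ x : Euc n, MeasurableSet {y : Euc n | y ∈ K ∧ (2:ℝ) • x - y ∈ K} := by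
    intro x
    exact hAm.preimage (measurable_prodMk_left)
  have hfx : ∀ x, f x = ∫⁻ y, A.indicator 1 (x, y) := by
    intro x
    have heq : (fun y => A.indicator 1 (x, y)) =
        Set.indicator {y : Euc n | y ∈ K ∧ (2:ℝ) • x - y ∈ K} (fun _ => (1:ℝ≥0∞)) := by
      ext y
      by_cases hy : y ∈ K ∧ (2:ℝ) • x - y ∈ K
      · rw [Set.indicator_of_mem (show (x,y) ∈ A from hy),
          Set.indicator_of_mem (show y ∈ {y : Euc n | y ∈ K ∧ (2:ℝ) • x - y ∈ K} from hy)]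
        rfl
      · rw [Set.indicator_of_notMem (show (x,y) ∉ A from hy),
          Set.indicator_of_notMem (show y ∉ {y : Euc n | y ∈ K ∧ (2:ℝ) • x - y ∈ K} from hy)]
    rw [hf]
    simp only [heq]
    rw [lintegral_indicator (hsect x), setLIntegral_const, one_mul]
  have hswap : ∫⁻ x, f x = ∫⁻ y, ∫⁻ x, A.indicator 1 (x, y) := by
    simp_rw [hfx]
    exact lintegral_lintegral_swap ((measurable_one.indicator hAm).aemeasurable)
  have hinner : ∀ y : Euc n, (∫⁻ x, A.indicator 1 (x, y)) = K.indicator (fun _ => c) y := by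
    intro y
    by_cases hy : y ∈ K
    · have hsec : {x : Euc n | (x, y) ∈ A} = (2⁻¹:ℝ) • (y +ᵥ K) := by
        ext x
        constructor
        · rintro ⟨-, h2⟩
          refine ⟨y + ((2:ℝ) • x - y), Set.vadd_mem_vadd_set h2, by module⟩
        · rintro ⟨z, hz, rfl⟩
          obtain ⟨k, hk, rfl⟩ := hz
          refine ⟨hy, ?_⟩
          show (2:ℝ) • ((2⁻¹:ℝ) • (y +ᵥ k)) - y ∈ K
          have heqk : (2:ℝ) • ((2⁻¹:ℝ) • (y +ᵥ k)) - y = k := by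
            simp only [vadd_eq_add]; module
          rw [heqk]; exact hk
      have heq : (fun x => A.indicator 1 (x, y)) =
          Set.indicator {x : Euc n | (x, y) ∈ A} (fun _ => (1:ℝ≥0∞)) := by
        ext x
        by_cases hxy : (x, y) ∈ A
        · rw [Set.indicator_of_mem hxy, Set.indicator_of_mem (show x ∈ {x : Euc n | (x,y) ∈ A} from hxy)]
          rfl
        · rw [Set.indicator_of_notMem hxy, Set.indicator_of_notMem (show x ∉ {x : Euc n | (x,y) ∈ A} from hxy)]
      have hsm : MeasurableSet {x : Euc n | (x, y) ∈ A} :=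
        hAm.preimage (measurable_prodMk_right)
      simp only [heq]
      rw [lintegral_indicator hsm, setLIntegral_const, one_mul, hsec,
        Measure.addHaar_smul_of_nonneg volume (by norm_num : (0:ℝ) ≤ 2⁻¹),
        finrank_euclideanSpace_fin, measure_vadd, Set.indicator_of_mem hy]
    · have heq : (fun x => A.indicator 1 (x, y)) = fun _ => (0:ℝ≥0∞) := by
        ext x
        rw [Set.indicator_of_notMem]
        intro hxy
        exact hy hxy.1
      simp [heq, Set.indicator_of_notMem hy]
  have htot : ∫⁻ x, f x = c * volume K := by
    rw [hswap]
    simp_rw [hinner]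
    rw [lintegral_indicator hKm, setLIntegral_const]
  by_contra hcon
  push_neg at hcon
  have hle : ∀ x, f x ≤ K.indicator (fun _ => c) x := by
    intro x
    by_cases hx : x ∈ K
    · rw [Set.indicator_of_mem hx]; exact (hcon x).le
    · have hemp : {y : Euc n | y ∈ K ∧ (2:ℝ) • x - y ∈ K} = ∅ := by
        ext y
        simp only [Set.mem_setOf_eq, Set.mem_empty_iff_false, iff_false, not_and]
        intro hy1 hy2
        exact hx (sect_mem hconv hy1 hy2)
      rw [hf]
      simp [hemp]
  have heqae : (fun x => f x) =ᵐ[volume] K.indicator (fun _ => c) := by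
    apply ae_eq_of_ae_le_of_lintegral_le (ae_of_all _ hle)
    · rw [htot]; exact (ENNReal.mul_lt_top hcfin hKfin).ne
    · exact (measurable_const.indicator hKm).aemeasurable
    · rw [htot, lintegral_indicator hKm, setLIntegral_const]
  have hex : ∃ x ∈ K, f x = c := by
    by_contra hno
    push_neg at hno
    rw [Filter.EventuallyEq, ae_iff] at heqae
    have hsub : K ⊆ {x | ¬ f x = K.indicator (fun _ => c) x} := by
      intro x hx
      simp only [Set.mem_setOf_eq, Set.indicator_of_mem hx]
      exact hno x hx
    exact hKpos.ne' (measure_mono_null hsub heqae)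
  obtain ⟨x, hxK, hfxc⟩ := hex
  exact (hcon x).ne hfxc

lemma encard_biUnion_le {α β : Type*} [DecidableEq α] (T : Finset α) (f : α → Set β) :
    (⋃ i ∈ T, f i).encard ≤ ∑ i ∈ T, (f i).encard := by
  induction T using Finset.induction_on with
  | empty => simp
  | insert _ _ hx ih =>
      rename_i a s
      rw [Finset.set_biUnion_insert, Finset.sum_insert hx]
      exact le_trans (Set.encard_union_le _ _) (add_le_add_right ih _)

lemma latticeG_smul_le_nat
    {n : ℕ} (K : Set (Euc n))
    (hconv : Convex ℝ K) (hcomp : IsCompact K) (hint : (interior K).Nonempty)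
    (L : Set (Euc n))
    (t : ℝ) (ht : 0 < t)
    (x0 : Euc n) (hx0K : x0 ∈ K)
    (hx0 : ENNReal.ofReal ((2:ℝ)⁻¹ ^ n) * volume K ≤
      volume {y : Euc n | y ∈ K ∧ (2:ℝ) • x0 - y ∈ K}) :
    latticeG (t • K) L ≤ ((Nat.floor ((4*t+2)^n) : ℕ∞)) * latticeG K L := by
  classical
  have hKm : MeasurableSet K := hcomp.isClosed.measurableSet
  have hKpos : 0 < volume K := Measure.measure_pos_of_nonempty_interior _ hint
  have hKfin : volume K < ⊤ := hcomp.measure_lt_top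
  set M : ℕ := Nat.floor ((4*t+2)^n) with hM
  set C : Set (Euc n) := {z : Euc n | x0 + z ∈ K ∧ x0 - z ∈ K} with hCdef
  have hC0 : (0:Euc n) ∈ C := ⟨by simpa using hx0K, by simpa using hx0K⟩
  have hCsymm : ∀ z ∈ C, -z ∈ C := fun z hz => ⟨by simpa [← sub_eq_add_neg] using hz.2, by simpa using hz.1⟩
  have hCconv : Convex ℝ C := by
    intro z hz w hw a b ha hb hab
    constructor
    · have h1 := hconv hz.1 hw.1 ha hb hab
      have : a • (x0 + z) + b • (x0 + w) = x0 + (a • z + b • w) := by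
        rw [show (x0 : Euc n) + (a • z + b • w) = (a+b) • x0 + (a • z + b • w) by rw [hab, one_smul]]
        module
      rwa [this] at h1
    · have h1 := hconv hz.2 hw.2 ha hb hab
      have : a • (x0 - z) + b • (x0 - w) = x0 - (a • z + b • w) := by
        rw [show (x0 : Euc n) - (a • z + b • w) = (a+b) • x0 - (a • z + b • w) by rw [hab, one_smul]]
        module
      rwa [this] at h1
  have hCclosed : IsClosed C := by
    have : C = ((fun z : Euc n => x0 + z) ⁻¹' K) ∩ ((fun z : Euc n => x0 - z) ⁻¹' K) := rfl
    rw [this]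
    exact (hcomp.isClosed.preimage (by fun_prop)).inter (hcomp.isClosed.preimage (by fun_prop))
  have hCm : MeasurableSet C := hCclosed.measurableSet
  have hCK' : ∀ z ∈ C, z ∈ (-x0) +ᵥ K := by
    intro z hz
    exact ⟨x0 + z, hz.1, by simp only [vadd_eq_add]; module⟩
  have hCvol : ENNReal.ofReal ((2:ℝ)⁻¹ ^ n) * volume K ≤ volume C := by
    have hset : x0 +ᵥ C = {y : Euc n | y ∈ K ∧ (2:ℝ) • x0 - y ∈ K} := by
      ext y
      constructor
      · rintro ⟨z, hz, rfl⟩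
        refine ⟨by simpa [vadd_eq_add] using hz.1, ?_⟩
        show (2:ℝ) • x0 - (x0 +ᵥ z) ∈ K
        have : (2:ℝ) • x0 - (x0 +ᵥ z) = x0 - z := by simp only [vadd_eq_add]; module
        rw [this]; exact hz.2
      · intro hy
        refine ⟨y - x0, ⟨?_, ?_⟩, by simp [vadd_eq_add]⟩
        · have : x0 + (y - x0) = y := by module
          rw [this]; exact hy.1
        · have : x0 - (y - x0) = (2:ℝ) • x0 - y := by module
          rw [this]; exact hy.2
    calc ENNReal.ofReal ((2:ℝ)⁻¹ ^ n) * volume K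
        ≤ volume (x0 +ᵥ C) := by rw [hset]; exact hx0
      _ = volume C := measure_vadd volume x0 C
  set K' : Set (Euc n) := (-x0) +ᵥ K with hK'def
  have hK'conv : Convex ℝ K' := by
    intro z hz w hw a b ha hb hab
    obtain ⟨p, hp, rfl⟩ := hz
    obtain ⟨q, hq, rfl⟩ := hw
    refine ⟨a • p + b • q, hconv hp hq ha hb hab, ?_⟩
    show -x0 + (a • p + b • q) = a • (-x0 +ᵥ p) + b • (-x0 +ᵥ q)
    simp only [vadd_eq_add]
    rw [show a • (-x0 + p) + b • (-x0 + q) = (a+b) • (-x0) + (a • p + b • q) by module, hab]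
    module
  have hK'vol : volume K' = volume K := measure_vadd volume (-x0) K
  -- the key cardinality bound for separated sets
  have hcard : ∀ (x : Euc n) (T : Finset (Euc n)), (↑T ⊆ x +ᵥ t • K) →
      (∀ s ∈ T, ∀ s' ∈ T, s ≠ s' → s - s' ∉ C) → T.card ≤ M := by
    intro x T hTS hTsep
    have hdisj : (T : Set (Euc n)).PairwiseDisjoint (fun s => s +ᵥ (2⁻¹:ℝ) • C) := by
      intro a ha b hb hab
      refine Set.disjoint_left.2 ?_
      rintro u ⟨p, ⟨cc, hcc, rfl⟩, rfl⟩ ⟨q, ⟨cc', hcc', rfl⟩, he⟩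
      -- he : b +ᵥ 2⁻¹ • cc' = a +ᵥ 2⁻¹ • cc
      apply hTsep a ha b hb hab
      have hmem := hCconv hcc' (hCsymm cc hcc) (by norm_num : (0:ℝ) ≤ 2⁻¹)
        (by norm_num : (0:ℝ) ≤ 2⁻¹) (by norm_num)
      have hab2 : a - b = (2⁻¹:ℝ) • cc' + (2⁻¹:ℝ) • (-cc) := by
        have he' : b + (2⁻¹:ℝ) • cc' = a + (2⁻¹:ℝ) • cc := by
          simpa [vadd_eq_add] using he
        have := congrArg (fun u => u - b - (2⁻¹:ℝ) • cc) he'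
        rw [show b + (2⁻¹:ℝ) • cc' - b - (2⁻¹:ℝ) • cc = (2⁻¹:ℝ) • cc' + (2⁻¹:ℝ) • (-cc) by module,
          show a + (2⁻¹:ℝ) • cc - b - (2⁻¹:ℝ) • cc = a - b by module] at this
        exact this.symm
      rwa [hab2]
    have hmeas : ∀ s : Euc n, MeasurableSet (s +ᵥ (2⁻¹:ℝ) • C) := by
      intro s
      have h1 : MeasurableSet ((2⁻¹:ℝ) • C) := (hCclosed.smul₀ (2⁻¹:ℝ)).measurableSet
      simpa using h1.const_vadd s
    have hsum : ∑ s ∈ T, volume (s +ᵥ (2⁻¹:ℝ) • C) = volume (⋃ s ∈ T, s +ᵥ (2⁻¹:ℝ) • C) :=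
      (measure_biUnion_finset hdisj (fun s _ => hmeas s)).symm
    have hsub : (⋃ s ∈ T, s +ᵥ (2⁻¹:ℝ) • C) ⊆ (x + t • x0) +ᵥ (t + 2⁻¹) • K' := by
      intro u hu
      simp only [Set.mem_iUnion] at hu
      obtain ⟨s, hsT, hus⟩ := hu
      obtain ⟨w, ⟨cc, hcc, rfl⟩, rfl⟩ := hus
      obtain ⟨v, hv, hveq⟩ : s ∈ x +ᵥ t • K := hTS hsT
      obtain ⟨k, hk, hkeq⟩ := hv
      rw [hK'conv.add_smul ht.le (by norm_num : (0:ℝ) ≤ 2⁻¹)]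
      refine ⟨t • (k - x0) + (2⁻¹:ℝ) • cc,
        Set.add_mem_add (Set.smul_mem_smul_set ⟨k, hk, by simp only [vadd_eq_add]; module⟩)
          (Set.smul_mem_smul_set (hCK' cc hcc)), ?_⟩
      rw [← hveq, ← hkeq]
      simp only [vadd_eq_add]
      module
    have hcontvol : volume ((x + t • x0) +ᵥ (t + 2⁻¹) • K') =
        ENNReal.ofReal ((t + 2⁻¹) ^ n) * volume K := by
      rw [measure_vadd, Measure.addHaar_smul_of_nonneg volume (by positivity : (0:ℝ) ≤ t + 2⁻¹),
        finrank_euclideanSpace_fin, hK'vol]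
    have hhalfvol : ∀ s : Euc n, volume (s +ᵥ (2⁻¹:ℝ) • C) =
        ENNReal.ofReal ((2:ℝ)⁻¹ ^ n) * volume C := by
      intro s
      rw [measure_vadd, Measure.addHaar_smul_of_nonneg volume (by norm_num : (0:ℝ) ≤ 2⁻¹),
        finrank_euclideanSpace_fin]
    have hchain : (T.card : ℝ≥0∞) * (ENNReal.ofReal ((2:ℝ)⁻¹ ^ n) * volume C) ≤
        ENNReal.ofReal ((t + 2⁻¹) ^ n) * volume K := by
      calc (T.card : ℝ≥0∞) * (ENNReal.ofReal ((2:ℝ)⁻¹ ^ n) * volume C)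
          = ∑ s ∈ T, volume (s +ᵥ (2⁻¹:ℝ) • C) := by
            rw [Finset.sum_congr rfl (fun s _ => hhalfvol s), Finset.sum_const, nsmul_eq_mul]
        _ = volume (⋃ s ∈ T, s +ᵥ (2⁻¹:ℝ) • C) := hsum
        _ ≤ volume ((x + t • x0) +ᵥ (t + 2⁻¹) • K') := measure_mono hsub
        _ = ENNReal.ofReal ((t + 2⁻¹) ^ n) * volume K := hcontvol
    -- now conclude card ≤ M
    have hq : (ENNReal.ofReal ((2:ℝ)⁻¹ ^ n) ≠ 0) := by
      simp only [ne_eq, ENNReal.ofReal_eq_zero, not_le]; positivity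
    have hstep : (T.card : ℝ≥0∞) * (ENNReal.ofReal ((2:ℝ)⁻¹ ^ n) * (ENNReal.ofReal ((2:ℝ)⁻¹ ^ n) * volume K)) ≤
        ENNReal.ofReal ((t + 2⁻¹) ^ n) * volume K :=
      le_trans (mul_le_mul_right (mul_le_mul_right hCvol _) _) hchain
    have hrw : (ENNReal.ofReal ((2:ℝ)⁻¹ ^ n) * (ENNReal.ofReal ((2:ℝ)⁻¹ ^ n) * volume K)) =
        (ENNReal.ofReal ((2:ℝ)⁻¹ ^ n * (2:ℝ)⁻¹ ^ n)) * volume K := by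
      rw [ENNReal.ofReal_mul (by positivity), mul_assoc]
    rw [hrw, ← mul_assoc] at hstep
    have hcancel : (T.card : ℝ≥0∞) * ENNReal.ofReal ((2:ℝ)⁻¹ ^ n * (2:ℝ)⁻¹ ^ n) ≤
        ENNReal.ofReal ((t + 2⁻¹) ^ n) :=
      (ENNReal.mul_le_mul_iff_left hKpos.ne' hKfin.ne).1 hstep
    have hfact : ENNReal.ofReal ((t + 2⁻¹) ^ n) =
        ENNReal.ofReal ((4*t+2) ^ n) * ENNReal.ofReal ((2:ℝ)⁻¹ ^ n * (2:ℝ)⁻¹ ^ n) := by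
      rw [← ENNReal.ofReal_mul (by positivity)]
      congr 1
      rw [← mul_pow, ← mul_pow]
      congr 1
      ring
    rw [hfact] at hcancel
    have hfin : (T.card : ℝ≥0∞) ≤ ENNReal.ofReal ((4*t+2) ^ n) := by
      have hq2 : ENNReal.ofReal ((2:ℝ)⁻¹ ^ n * (2:ℝ)⁻¹ ^ n) ≠ 0 := by
        simp only [ne_eq, ENNReal.ofReal_eq_zero, not_le]; positivity
      exact (ENNReal.mul_le_mul_iff_left hq2 ENNReal.ofReal_ne_top).1 hcancel
    have : ((T.card : ℝ)) ≤ (4*t+2) ^ n := by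
      rw [← ENNReal.ofReal_natCast] at hfin
      exact (ENNReal.ofReal_le_ofReal_iff (by positivity)).1 hfin
    exact Nat.le_floor this
  -- per-translate bound
  have key : ∀ x : Euc n, ((x +ᵥ t • K) ∩ L).encard ≤ (M : ℕ∞) * latticeG K L := by
    intro x
    set S : Set (Euc n) := (x +ᵥ t • K) ∩ L with hS
    set Sep : Finset (Euc n) → Prop :=
      fun T => ↑T ⊆ S ∧ ∀ s ∈ T, ∀ s' ∈ T, s ≠ s' → s - s' ∉ C with hSepDef
    have hSepCard : ∀ T, Sep T → T.card ≤ M := by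
      intro T hT
      exact hcard x T (hT.1.trans (Set.inter_subset_left)) hT.2
    set Ks : Set ℕ := {k | ∃ T : Finset (Euc n), Sep T ∧ T.card = k} with hKs
    have h0 : 0 ∈ Ks := ⟨∅, ⟨by simp, by simp⟩, rfl⟩
    have hbdd : BddAbove Ks := ⟨M, fun k ⟨T, hT, hk⟩ => hk ▸ hSepCard T hT⟩
    obtain ⟨Tm, hTmSep, hTmcard⟩ : sSup Ks ∈ Ks := Nat.sSup_mem ⟨0, h0⟩ hbdd
    have hcov : ∀ s ∈ S, ∃ s' ∈ Tm, s - s' ∈ C := by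
      intro s hs
      by_contra hno
      push_neg at hno
      have hsT : s ∉ Tm := by
        intro hsT
        exact hno s hsT (by rw [sub_self]; exact hC0)
      have hSepIns : Sep (insert s Tm) := by
        constructor
        · rw [Finset.coe_insert]
          exact Set.insert_subset hs hTmSep.1
        · intro a ha b hb hab
          rcases Finset.mem_insert.1 ha with rfl | haT
          · rcases Finset.mem_insert.1 hb with rfl | hbT
            · exact absurd rfl hab
            · exact hno b hbT
          · rcases Finset.mem_insert.1 hb with rfl | hbT
            · intro hmem
              apply hno a haT
              have := hCsymm _ hmem
              rwa [neg_sub] at this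
            · exact hTmSep.2 a haT b hbT hab
      have hle : (insert s Tm).card ≤ sSup Ks :=
        le_csSup hbdd ⟨insert s Tm, hSepIns, rfl⟩
      rw [Finset.card_insert_of_notMem hsT, hTmcard] at hle
      omega
    have hScov : S ⊆ ⋃ s' ∈ Tm, (((s' - x0) +ᵥ K) ∩ L) := by
      intro s hs
      obtain ⟨s', hs', hsC⟩ := hcov s hs
      simp only [Set.mem_iUnion]
      refine ⟨s', hs', ⟨⟨x0 + (s - s'), hsC.1, by simp only [vadd_eq_add]; module⟩, hs.2⟩⟩
    calc S.encard ≤ (⋃ s' ∈ Tm, (((s' - x0) +ᵥ K) ∩ L)).encard := Set.encard_mono hScov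
      _ ≤ ∑ s' ∈ Tm, (((s' - x0) +ᵥ K) ∩ L).encard := encard_biUnion_le _ _
      _ ≤ Tm.card • latticeG K L := Finset.sum_le_card_nsmul _ _ _
          (fun i _ => le_iSup (fun y : Euc n => ((y +ᵥ K) ∩ L).encard) (i - x0))
      _ = (Tm.card : ℕ∞) * latticeG K L := by rw [nsmul_eq_mul]
      _ ≤ (M : ℕ∞) * latticeG K L := by
          apply mul_le_mul_left
          exact_mod_cast Nat.cast_le.2 (hSepCard Tm hTmSep)
  exact iSup_le key

theorem latticeG_smul_le
    {n : ℕ} (K : Set (Euc n)) (hK : IsConvexBody K)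
    (L : AddSubgroup (Euc n)) (hdisc : DiscreteTopology L)
    (hfull : Submodule.span ℝ (L : Set (Euc n)) = ⊤)
    (t : ℝ) (ht : 0 < t) :
    (latticeG (t • K) (L : Set (Euc n)) : ℝ≥0∞) ≤
      ENNReal.ofReal ((4 * t + 2) ^ n) * (latticeG K (L : Set (Euc n)) : ℝ≥0∞) := by
  obtain ⟨hconv, hcomp, hint⟩ := hK
  obtain ⟨x0, hx0K, hx0⟩ := exists_good_center hconv hcomp hint
  have hnat := latticeG_smul_le_nat K hconv hcomp hint (L : Set (Euc n)) t ht x0 hx0K hx0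
  calc (latticeG (t • K) (L : Set (Euc n)) : ℝ≥0∞)
      ≤ (((Nat.floor ((4*t+2)^n) : ℕ∞) * latticeG K (L : Set (Euc n)) : ℕ∞) : ℝ≥0∞) :=
        ENat.toENNReal_le.2 hnat
    _ = ((Nat.floor ((4*t+2)^n) : ℝ≥0∞)) * (latticeG K (L : Set (Euc n)) : ℝ≥0∞) := by
        rw [ENat.toENNReal_mul]; norm_cast
    _ ≤ ENNReal.ofReal ((4 * t + 2) ^ n) * (latticeG K (L : Set (Euc n)) : ℝ≥0∞) := by
        apply mul_le_mul_left
        rw [← ENNReal.ofReal_natCast]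
        exact ENNReal.ofReal_le_ofReal (Nat.floor_le (by positivity))

end
end

section
/- Let L ⊆ ℝ^n be a full-rank lattice and let P ⊆ ℝ^n be a compact, centrally symmetric convex set with nonempty interior that tiles ℝ^n by L, i.e. L + P = ℝ^n and for distinct x, y ∈ L the interiors of x + P and y + P are disjoint. Then for every convex body K ⊆ ℝ^n and every ε ≥ 0, the set {x ∈ L : (x + (1+ε)P) ∩ K ≠ ∅} is finite of cardinality at most vol(K + (2+ε)P) / vol(P). -/
open MeasureTheory Pointwise
open scoped ENNReal

noncomputable section

theorem tiling_intersecting_tiles_card_le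
    {n : ℕ} (L : AddSubgroup (Euc n)) (hdisc : DiscreteTopology L)
    (hfull : Submodule.span ℝ (L : Set (Euc n)) = ⊤)
    (P : Set (Euc n)) (hPcomp : IsCompact P) (hPconv : Convex ℝ P)
    (hPint : (interior P).Nonempty) (hPsym : P = -P)
    (hcover : (L : Set (Euc n)) + P = Set.univ)
    (hdisj : ∀ x ∈ L, ∀ y ∈ L, x ≠ y →
      interior (x +ᵥ P) ∩ interior (y +ᵥ P) = ∅)
    (K : Set (Euc n)) (hK : IsConvexBody K) (ε : ℝ) (hε : 0 ≤ ε) :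
    ({x : Euc n | x ∈ L ∧ ((x +ᵥ (1 + ε) • P) ∩ K).Nonempty}.encard : ℝ≥0∞) ≤
      volume (K + (2 + ε) • P) / volume P := by
  set S : Set (Euc n) := {x : Euc n | x ∈ L ∧ ((x +ᵥ (1 + ε) • P) ∩ K).Nonempty} with hS
  -- S is contained in a bounded set intersect L
  have hsub : S ⊆ (K + (1 + ε) • P) ∩ (L : Set (Euc n)) := by
    rintro x ⟨hxL, y, hy1, hy2⟩
    obtain ⟨p, hp, rfl⟩ := hy1
    refine ⟨⟨x +ᵥ p, hy2, -p, ?_, by simp [vadd_eq_add]⟩, hxL⟩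
    obtain ⟨q, hq, rfl⟩ := hp
    exact ⟨-q, by rw [hPsym]; exact Set.neg_mem_neg.mpr hq, by simp⟩
  have hfin : S.Finite := by
    refine Set.Finite.subset (Metric.finite_isBounded_inter_isClosed DiscreteTopology.isDiscrete ?_ ?_) hsub
    · exact ((hK.2.1.add (hPcomp.smul _)).isBounded)
    · exact AddSubgroup.isClosed_of_discrete
  -- each tile x + P for x ∈ S is contained in K + (2+ε)P
  have htile : ∀ x ∈ S, x +ᵥ P ⊆ K + (2 + ε) • P := by
    rintro x ⟨hxL, y, hy1, hy2⟩
    obtain ⟨p, hp, rfl⟩ := hy1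
    rintro z ⟨q, hq, rfl⟩
    have h2 : (2 + ε) • P = (1 + ε) • P + P := by
      have he : (2:ℝ) + ε = (1 + ε) + 1 := by ring
      rw [he, hPconv.add_smul (by linarith) zero_le_one, one_smul]
    rw [h2]
    have hnp : -p ∈ (1 + ε) • P := by
      obtain ⟨r, hr, rfl⟩ := hp
      exact ⟨-r, by rw [hPsym]; exact Set.neg_mem_neg.mpr hr, by simp⟩
    exact ⟨x +ᵥ p, hy2, -p + q, Set.add_mem_add hnp hq, by
      simp only [vadd_eq_add]; abel⟩
  -- volume counting
  have hvolP0 : volume P ≠ 0 := by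
    have h1 : volume (interior P) ≠ 0 := isOpen_interior.measure_ne_zero volume hPint
    exact fun h => h1 (le_antisymm (h ▸ measure_mono interior_subset) zero_le)
  have hvolPtop : volume P ≠ ⊤ := hPcomp.measure_lt_top.ne
  have hintP : volume (interior P) = volume P :=
    measure_interior_of_null_frontier (hPconv.addHaar_frontier volume)
  rw [ENNReal.le_div_iff_mul_le (Or.inl hvolP0) (Or.inl hvolPtop)]
  set T := hfin.toFinset with hT
  have hcard : (S.encard : ℝ≥0∞) = (T.card : ℝ≥0∞) := by
    rw [hfin.encard_eq_coe_toFinset_card]; simp [hT]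
  rw [hcard]
  have hsum : ∑ x ∈ T, volume (interior (x +ᵥ P)) = (T.card : ℝ≥0∞) * volume P := by
    have : ∀ x ∈ T, volume (interior (x +ᵥ P)) = volume P := by
      intro x _
      rw [show interior (x +ᵥ P) = x +ᵥ interior P from interior_vadd x P,
        measure_vadd, hintP]
    rw [Finset.sum_congr rfl this, Finset.sum_const, nsmul_eq_mul]
  calc (T.card : ℝ≥0∞) * volume P = ∑ x ∈ T, volume (interior (x +ᵥ P)) := hsum.symm
    _ = volume (⋃ x ∈ T, interior (x +ᵥ P)) := by
        refine (measure_biUnion_finset ?_ (fun x _ => measurableSet_interior)).symm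
        intro x hx y hy hxy
        simp only [Function.onFun]
        rw [Set.disjoint_iff_inter_eq_empty]
        exact hdisj x (hfin.mem_toFinset.mp hx).1 y (hfin.mem_toFinset.mp hy).1 hxy
    _ ≤ volume (K + (2 + ε) • P) := by
        refine measure_mono (Set.iUnion₂_subset fun x hx => ?_)
        exact interior_subset.trans (htile x (hfin.mem_toFinset.mp hx))

end
end
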